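/- arXiv:2203.12077 — 4 statements merged into one kernel-verified Lean document; each statement's English description precedes it below -/
import Mathlib

section
/- The theta function of the Kummer lattice is given by Θ_K(q²,w) = θ₀¹⁶ + 30·θ₀⁸θ₁⁸ + θ₁¹⁶. -/
/-- The rank-one theta function `θ₀(q²,w) = Σ_{k∈ℤ} q^{2k²} w^k`. -/
noncomputable def theta0 (q w : ℂ) : ℂ := ∑' k : ℤ, q ^ (2 * k ^ 2) * w ^ k

/-- The rank-one theta function `θ₁(q²,w) = Σ_{k∈ℤ+1/2} q^{2k²} w^k`,
written via the square roots `p² = q`, `u² = w`. -/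
noncomputable def theta1 (p u : ℂ) : ℂ :=
  ∑' k : ℤ, p ^ (4 * k ^ 2 + 4 * k + 1) * u ^ (2 * k + 1)

/-- The vector space `F₂⁴` (16 points), indexing the coordinates. -/
abbrev V4 : Type := Fin 4 → ZMod 2

/-- The Kummer lattice in exceptional-curve coordinates, in *doubled* coordinates:
`a = 2v` where `v ∈ ℝ^{F₂⁴}` has half-integer coordinates and the function
`F₂⁴ → F₂`, `x ↦ 2 v_x mod 2 = a_x mod 2`, is affine-linear. -/
def KummerD : Set (V4 → ℤ) :=
  {a | ∃ (l : V4 →ₗ[ZMod 2] ZMod 2) (c : ZMod 2), ∀ x, ((a x : ZMod 2)) = l x + c}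

/-- The theta function `Θ_T(q²,w) = Σ_{v∈T} q^{2 Σ v_x²} w^{Σ v_x}`, for a set `T`
of half-integer vectors given in doubled coordinates `a = 2v`, so that
`2 Σ v_x² = (Σ a_x²)/2` and `Σ v_x = (Σ a_x)/2` (integers for the sets considered). -/
noncomputable def ThetaL {ι : Type*} [Fintype ι] (T : Set (ι → ℤ)) (q w : ℂ) : ℂ :=
  ∑' v : T, q ^ ((∑ i, (v : ι → ℤ) i ^ 2) / 2) * w ^ ((∑ i, (v : ι → ℤ) i) / 2)

open Finset

/-! ### One-variable building block -/

noncomputable def Tm (p u : ℂ) (n : ℤ) : ℂ := p ^ (n ^ 2) * u ^ n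

lemma zpow_finset_sum {α : Type*} {p : ℂ} (hp : p ≠ 0) (s : Finset α) (f : α → ℤ) :
    p ^ (∑ i ∈ s, f i) = ∏ i ∈ s, p ^ f i := by
  classical
  induction s using Finset.induction with
  | empty => simp
  | insert _ _ h ih => rw [Finset.sum_insert h, Finset.prod_insert h, zpow_add₀ hp, ih]

lemma summable_aux {r s : ℝ} (hr0 : 0 ≤ r) (hr : r < 1) (hs : 0 ≤ s) :
    Summable fun n : ℕ => r ^ (n ^ 2) * s ^ n := by
  apply summable_of_ratio_norm_eventually_le (r := 1/2) (by norm_num)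
  have h0 : Filter.Tendsto (fun n : ℕ => r ^ n * s) Filter.atTop (nhds 0) := by
    simpa using (tendsto_pow_atTop_nhds_zero_of_lt_one hr0 hr).mul_const s
  filter_upwards [h0.eventually_lt_const (by norm_num : (0:ℝ) < 1/2)] with n hn
  have h1 : r ^ ((n+1) ^ 2) * s ^ (n+1) = (r ^ (2*n+1) * s) * (r ^ (n^2) * s ^ n) := by
    rw [show (n+1)^2 = n^2 + (2*n+1) by ring, pow_add, pow_succ]; ring
  have h2 : r ^ (2*n+1) ≤ r ^ n := pow_le_pow_of_le_one hr0 hr.le (by omega)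
  have h3 : r ^ (2*n+1) * s ≤ 1/2 := le_trans (mul_le_mul_of_nonneg_right h2 hs) hn.le
  rw [Real.norm_of_nonneg (by positivity), Real.norm_of_nonneg (by positivity), h1]
  exact mul_le_mul_of_nonneg_right h3 (by positivity)

lemma summable_Tm_norm {p u : ℂ} (hp : ‖p‖ < 1) :
    Summable fun n : ℤ => ‖Tm p u n‖ := by
  have key : ∀ v : ℂ, Summable fun n : ℕ => ‖Tm p v (n : ℤ)‖ := by
    intro v
    have he : (fun n : ℕ => ‖Tm p v (n : ℤ)‖)
        = fun n : ℕ => ‖p‖ ^ (n ^ 2) * ‖v‖ ^ n := by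
      funext n
      have h2 : ((n : ℤ)) ^ 2 = ((n ^ 2 : ℕ) : ℤ) := by push_cast; ring
      show ‖p ^ ((n : ℤ) ^ 2) * v ^ (n : ℤ)‖ = _
      rw [h2, zpow_natCast, zpow_natCast, norm_mul, norm_pow, norm_pow]
    rw [he]
    exact summable_aux (norm_nonneg p) hp (norm_nonneg v)
  apply Summable.of_nat_of_neg (f := fun n : ℤ => ‖Tm p u n‖) (key u)
  have he : (fun n : ℕ => ‖Tm p u (-(n : ℤ))‖) = fun n : ℕ => ‖Tm p u⁻¹ (n : ℤ)‖ := by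
    funext n
    have h1 : (-(n:ℤ)) ^ 2 = (n:ℤ) ^ 2 := by ring
    simp only [Tm, h1, zpow_neg, ← inv_zpow]
  have h := key u⁻¹
  rw [← he] at h
  exact h

lemma tsum_Tm_even {q w p u : ℂ} (hp : p ^ 2 = q) (hu : u ^ 2 = w) :
    ∑' k : ℤ, Tm p u (2 * k) = theta0 q w := by
  unfold Tm theta0
  refine tsum_congr fun k => ?_
  have h1 : p ^ ((2 * k) ^ 2) = q ^ (2 * k ^ 2) := by
    rw [← hp, ← zpow_natCast p 2, ← zpow_mul]
    congr 1; push_cast; ring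
  have h2 : u ^ ((2 : ℤ) * k) = w ^ k := by
    rw [← hu, ← zpow_natCast u 2, ← zpow_mul]
    norm_num
  rw [h1, h2]

lemma tsum_Tm_odd (p u : ℂ) :
    ∑' k : ℤ, Tm p u (2 * k + 1) = theta1 p u := by
  unfold Tm theta1
  refine tsum_congr fun k => ?_
  congr 2
  ring

/-! ### Product of tsums over a finite product of copies of `ℤ` -/

lemma tsum_prod_fin :
    ∀ (n : ℕ) (g : Fin n → ℤ → ℂ), (∀ i, Summable fun m => ‖g i m‖) →
      (Summable fun k : Fin n → ℤ => ‖∏ i, g i (k i)‖) ∧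
      ∑' k : Fin n → ℤ, ∏ i, g i (k i) = ∏ i, ∑' m, g i m := by
  intro n
  induction n with
  | zero =>
    intro g _
    have h1 : ∀ k : Fin 0 → ℤ, (∏ i, g i (k i)) = 1 := fun k => by simp
    constructor
    · exact Summable.of_finite
    · simp only [h1]
      rw [tsum_eq_single (default : Fin 0 → ℤ) (fun b hb => absurd (Subsingleton.elim b _) hb)]
      simp
  | succ n ih =>
    intro g hg
    set g' : Fin n → ℤ → ℂ := fun i => g i.succ with hg'
    obtain ⟨S', E'⟩ := ih g' fun i => hg i.succ
    have h0 := hg 0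
    set e : (Fin (n+1) → ℤ) ≃ ℤ × (Fin n → ℤ) :=
      ⟨fun k => (k 0, fun i => k i.succ), fun z => Fin.cons z.1 z.2,
        fun k => funext fun i => Fin.cases rfl (fun j => rfl) i,
        fun z => by simp⟩ with he
    have hprod : ∀ k : Fin (n+1) → ℤ,
        (∏ i, g i (k i)) = g 0 ((e k).1) * ∏ i, g' i ((e k).2 i) := by
      intro k
      rw [Fin.prod_univ_succ]
      rfl
    have hsum2 : Summable fun z : ℤ × (Fin n → ℤ) => ‖g 0 z.1 * ∏ i, g' i (z.2 i)‖ := by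
      have := h0.mul_of_nonneg S' (fun m => norm_nonneg _) (fun k => norm_nonneg _)
      simpa [norm_mul] using this
    constructor
    · have : (fun k : Fin (n+1) → ℤ => ‖∏ i, g i (k i)‖)
          = (fun z : ℤ × (Fin n → ℤ) => ‖g 0 z.1 * ∏ i, g' i (z.2 i)‖) ∘ e := by
        funext k; simp [hprod k]
      rw [this]
      exact hsum2.comp_injective e.injective
    · have step1 : ∑' k : Fin (n+1) → ℤ, ∏ i, g i (k i)
          = ∑' z : ℤ × (Fin n → ℤ), g 0 z.1 * ∏ i, g' i (z.2 i) := by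
        rw [← Equiv.tsum_eq e (fun z : ℤ × (Fin n → ℤ) => g 0 z.1 * ∏ i, g' i (z.2 i))]
        exact tsum_congr fun k => hprod k
      rw [step1, ← tsum_mul_tsum_of_summable_norm h0 S', E', Fin.prod_univ_succ]

lemma tsum_prod_fintype {ι : Type*} [Fintype ι] (g : ι → ℤ → ℂ)
    (hg : ∀ i, Summable fun m => ‖g i m‖) :
    (Summable fun k : ι → ℤ => ‖∏ i, g i (k i)‖) ∧
    ∑' k : ι → ℤ, ∏ i, g i (k i) = ∏ i, ∑' m, g i m := by
  classical
  set n := Fintype.card ι with hn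
  set e : ι ≃ Fin n := Fintype.equivFin ι with he
  set E : (ι → ℤ) ≃ (Fin n → ℤ) := Equiv.arrowCongr e (Equiv.refl ℤ) with hE
  set g'' : Fin n → ℤ → ℂ := fun j => g (e.symm j) with hg''
  obtain ⟨S, Eq⟩ := tsum_prod_fin n g'' fun j => hg (e.symm j)
  have hE' : ∀ k' : Fin n → ℤ, E.symm k' = fun i => k' (e i) := by
    intro k'; funext i; simp [hE, Equiv.arrowCongr]
  have hprod : ∀ k' : Fin n → ℤ, (∏ i, g i ((E.symm k') i)) = ∏ j, g'' j (k' j) := by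
    intro k'
    rw [hE']
    rw [← e.symm.prod_comp (fun i => g i (k' (e i)))]
    refine Finset.prod_congr rfl fun j _ => ?_
    rw [e.apply_symm_apply]
  constructor
  · have h1 : (fun k : ι → ℤ => ‖∏ i, g i (k i)‖)
        = (fun k' : Fin n → ℤ => ‖∏ j, g'' j (k' j)‖) ∘ E := by
      funext k
      have := hprod (E k)
      rw [E.symm_apply_apply] at this
      simp [this]
    rw [h1]
    exact S.comp_injective E.injective
  · rw [← E.symm.tsum_eq (fun k : ι → ℤ => ∏ i, g i (k i))]
    have h2 : ∑' k' : Fin n → ℤ, ∏ i, g i ((E.symm k') i)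
        = ∑' k' : Fin n → ℤ, ∏ j, g'' j (k' j) :=
      tsum_congr fun k' => hprod k'
    rw [h2, Eq, ← e.symm.prod_comp (fun i => ∑' m, g i m)]

/-! ### The affine pieces -/

def Sset (b : Fin 4 → ZMod 2) (c : ZMod 2) : Set (V4 → ℤ) :=
  {a | ∀ x, ((a x : ZMod 2)) = ∑ i, b i * x i + c}

lemma kummer_eq_iUnion :
    KummerD = ⋃ bc ∈ (Finset.univ : Finset ((Fin 4 → ZMod 2) × ZMod 2)),
      Sset bc.1 bc.2 := by
  ext a
  simp only [Set.mem_iUnion, Finset.mem_coe, Finset.mem_univ, exists_prop, true_and,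
    Prod.exists]
  constructor
  · rintro ⟨l, c, h⟩
    refine ⟨fun i => l (fun j => if i = j then 1 else 0), c, fun x => ?_⟩
    rw [h x]
    have hl : l x = ∑ i, l (fun j => if i = j then 1 else 0) * x i := by
      conv_lhs => rw [pi_eq_sum_univ x]
      rw [map_sum]
      exact Finset.sum_congr rfl fun i _ => by rw [map_smul, smul_eq_mul, mul_comm]
    rw [hl]
  · rintro ⟨b, c, h⟩
    refine ⟨∑ i, b i • LinearMap.proj i, c, fun x => ?_⟩
    rw [h x]
    simp [LinearMap.sum_apply, LinearMap.smul_apply, LinearMap.proj_apply, smul_eq_mul]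

lemma sset_disjoint :
    ((Finset.univ : Finset ((Fin 4 → ZMod 2) × ZMod 2)) : Set _).Pairwise
      (Function.onFun Disjoint fun bc : (Fin 4 → ZMod 2) × ZMod 2 => Sset bc.1 bc.2) := by
  rintro ⟨b, c⟩ - ⟨b', c'⟩ - hne
  rw [Function.onFun, Set.disjoint_left]
  rintro a ha ha'
  apply hne
  have key : ∀ x : V4, ∑ i, b i * x i + c = ∑ i, b' i * x i + c' := fun x =>
    (ha x).symm.trans (ha' x)
  have hc : c = c' := by simpa using key 0
  have hb : b = b' := by
    funext j
    have := key (fun i => if j = i then 1 else 0)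
    simp only [mul_ite, mul_one, mul_zero, Finset.sum_ite_eq, Finset.mem_univ, if_true,
      hc] at this
    exact add_right_cancel this
  rw [hb, hc]

/-- The parametrization of one affine piece. -/
def pieceEquiv (b : Fin 4 → ZMod 2) (c : ZMod 2) :
    (V4 → ℤ) ≃ (Sset b c) where
  toFun k := ⟨fun x => 2 * k x + ((∑ i, b i * x i + c).val : ℤ), by
    intro x
    push_cast
    simp [show ((2 : ℤ) : ZMod 2) = 0 from rfl, show (2 : ZMod 2) = 0 from rfl,
      ZMod.natCast_val, ZMod.cast_id]⟩
  invFun a := fun x => ((a : V4 → ℤ) x - ((∑ i, b i * x i + c).val : ℤ)) / 2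
  left_inv k := by
    funext x
    simp only [add_sub_cancel_right]
    omega
  right_inv := by
    rintro ⟨a, ha⟩
    apply Subtype.ext
    funext x
    have h1 : ((a x - ((∑ i, b i * x i + c).val : ℤ) : ℤ) : ZMod 2) = 0 := by
      push_cast
      rw [ha x]
      simp [ZMod.natCast_val, ZMod.cast_id]
    
  -- 2 ∣ a x - val
    have h2 : (2 : ℤ) ∣ a x - ((∑ i, b i * x i + c).val : ℤ) := by
      rwa [ZMod.intCast_zmod_eq_zero_iff_dvd] at h1
    simp only
    omega

lemma zmod2_cases : ∀ d : ZMod 2, d = 0 ∨ d = 1 := by decide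

lemma even_eps_sum (b : Fin 4 → ZMod 2) (c : ZMod 2) :
    Even (∑ x : V4, (((∑ i, b i * x i + c).val : ℤ))) := by
  have key : ∀ (b : Fin 4 → ZMod 2) (c : ZMod 2),
      (∑ x : V4, (∑ i, b i * x i + c).val) % 2 = 0 := by decide
  have h := key b c
  rw [Int.even_iff]
  have hc : (∑ x : V4, (((∑ i, b i * x i + c).val : ℤ)))
      = ((∑ x : V4, (∑ i, b i * x i + c).val : ℕ) : ℤ) := by
    rw [Nat.cast_sum]
  rw [hc]
  exact_mod_cast h

/-- The summand of `ThetaL` as a function of the doubled vector. -/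
noncomputable def Ff (q w : ℂ) (a : V4 → ℤ) : ℂ :=
  q ^ ((∑ x, a x ^ 2) / 2) * w ^ ((∑ x, a x) / 2)

lemma heps2 : ∀ d : ZMod 2, ((d.val : ℤ)) ^ 2 = (d.val : ℤ) := by decide

lemma piece_eval {q w p u : ℂ} (hpne : p ≠ 0) (hune : u ≠ 0)
    (hp : p ^ 2 = q) (hu : u ^ 2 = w) (hpabs : ‖p‖ < 1)
    (b : Fin 4 → ZMod 2) (c : ZMod 2) :
    Summable (fun v : (Sset b c) => Ff q w (v : V4 → ℤ)) ∧
    ∑' v : (Sset b c), Ff q w (v : V4 → ℤ)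
      = ∏ x : V4, (if (∑ i, b i * x i + c) = 0 then theta0 q w else theta1 p u) := by
  classical
  have hTm : Summable fun n : ℤ => ‖Tm p u n‖ := summable_Tm_norm hpabs
  set ε : V4 → ℤ := fun x => ((∑ i, b i * x i + c).val : ℤ) with hε
  set g : V4 → ℤ → ℂ := fun x m => Tm p u (2 * m + ε x) with hg
  have hgsum : ∀ x, Summable fun m => ‖g x m‖ := by
    intro x
    exact hTm.comp_injective (fun m m' hmm => by omega)
  obtain ⟨hS, hE⟩ := tsum_prod_fintype g hgsum
  -- the key pointwise identity
  have key : ∀ k : V4 → ℤ, Ff q w ((pieceEquiv b c k : V4 → ℤ)) = ∏ x : V4, g x (k x) := by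
    intro k
    have ha : ((pieceEquiv b c k : V4 → ℤ)) = fun x => 2 * k x + ε x := rfl
    rw [ha]
    have hev1 : Even (∑ x : V4, (2 * k x + ε x)) := by
      have h1 : (∑ x : V4, (2 * k x + ε x)) = 2 * (∑ x : V4, k x) + ∑ x : V4, ε x := by
        rw [Finset.sum_add_distrib, Finset.mul_sum]
      rw [h1, hε]
      exact (even_two_mul _).add (even_eps_sum b c)
    have hev2 : Even (∑ x : V4, (2 * k x + ε x) ^ 2) := by
      have h1 : (∑ x : V4, (2 * k x + ε x) ^ 2)
          = 2 * (∑ x : V4, (2 * k x ^ 2 + 2 * k x * ε x)) + ∑ x : V4, ε x := by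
        rw [Finset.mul_sum, ← Finset.sum_add_distrib]
        refine Finset.sum_congr rfl fun x _ => ?_
        have h2 : (ε x) ^ 2 = ε x := by rw [hε]; exact heps2 _
        nlinarith [h2]
      rw [h1, hε]
      exact (even_two_mul _).add (even_eps_sum b c)
    have e2 : q ^ ((∑ x : V4, (2 * k x + ε x) ^ 2) / 2) = p ^ (∑ x : V4, (2 * k x + ε x) ^ 2) := by
      obtain ⟨t, ht⟩ := hev2
      have h2t : (∑ x : V4, (2 * k x + ε x) ^ 2) / 2 = t := by omega
      have h2t' : (∑ x : V4, (2 * k x + ε x) ^ 2) = (2 : ℤ) * t := by omega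
      rw [h2t, h2t', zpow_mul]
      congr 1
      rw [← hp, ← zpow_natCast p 2]
      norm_num
    have e1 : w ^ ((∑ x : V4, (2 * k x + ε x)) / 2) = u ^ (∑ x : V4, (2 * k x + ε x)) := by
      obtain ⟨t, ht⟩ := hev1
      have h2t : (∑ x : V4, (2 * k x + ε x)) / 2 = t := by omega
      have h2t' : (∑ x : V4, (2 * k x + ε x)) = (2 : ℤ) * t := by omega
      rw [h2t, h2t', zpow_mul]
      congr 1
      rw [← hu, ← zpow_natCast u 2]
      norm_num
    show q ^ ((∑ x : V4, (2 * k x + ε x) ^ 2) / 2) * w ^ ((∑ x : V4, (2 * k x + ε x)) / 2) = _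
    rw [e2, e1, zpow_finset_sum hpne, zpow_finset_sum hune, ← Finset.prod_mul_distrib]
    rfl
  have hsumpiece : Summable (fun v : (Sset b c) => Ff q w (v : V4 → ℤ)) := by
    rw [← Equiv.summable_iff (pieceEquiv b c)]
    have hcomp : ((fun v : (Sset b c) => Ff q w (v : V4 → ℤ)) ∘ (pieceEquiv b c))
        = fun k => ∏ x : V4, g x (k x) := funext key
    rw [hcomp]
    exact hS.of_norm
  refine ⟨hsumpiece, ?_⟩
  have hcoord : ∀ x : V4, (∑' m : ℤ, g x m)
      = if (∑ i, b i * x i + c) = 0 then theta0 q w else theta1 p u := by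
    intro x
    rcases zmod2_cases (∑ i, b i * x i + c) with h0 | h1
    · rw [if_pos h0]
      have hε0 : ε x = 0 := by rw [hε]; simp [h0]
      calc (∑' m : ℤ, g x m) = ∑' m : ℤ, Tm p u (2 * m) := by
            refine tsum_congr fun m => ?_
            rw [hg]
            simp only [hε0, add_zero]
        _ = theta0 q w := tsum_Tm_even hp hu
    · rw [if_neg (by rw [h1]; decide)]
      have hε1 : ε x = 1 := by rw [hε]; simp only [h1]; rfl
      calc (∑' m : ℤ, g x m) = ∑' m : ℤ, Tm p u (2 * m + 1) := by
            refine tsum_congr fun m => ?_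
            rw [hg]
            simp only [hε1]
        _ = theta1 p u := tsum_Tm_odd p u
  calc ∑' v : (Sset b c), Ff q w (v : V4 → ℤ)
      = ∑' k : V4 → ℤ, Ff q w ((pieceEquiv b c k : V4 → ℤ)) :=
        ((pieceEquiv b c).tsum_eq fun v : (Sset b c) => Ff q w (v : V4 → ℤ)).symm
    _ = ∑' k : V4 → ℤ, ∏ x : V4, g x (k x) := tsum_congr key
    _ = ∏ x : V4, ∑' m : ℤ, g x m := hE
    _ = ∏ x : V4, (if (∑ i, b i * x i + c) = 0 then theta0 q w else theta1 p u) :=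
        Finset.prod_congr rfl fun x _ => hcoord x

def Ncount (bc : (Fin 4 → ZMod 2) × ZMod 2) : ℕ :=
  (Finset.univ.filter fun x : V4 => (∑ i, bc.1 i * x i + bc.2) = 0).card

set_option maxHeartbeats 2000000 in
/-- `Θ_K(q²,w) = θ₀¹⁶ + 30·θ₀⁸θ₁⁸ + θ₁¹⁶` for the Kummer lattice `K`. -/
theorem theta_Kummer (q w p u : ℂ)
    (hq0 : 0 < ‖q‖) (hq1 : ‖q‖ < 1) (hw : w ≠ 0)
    (hp : p ^ 2 = q) (hu : u ^ 2 = w) :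
    ThetaL KummerD q w =
      theta0 q w ^ 16 + 30 * theta0 q w ^ 8 * theta1 p u ^ 8 + theta1 p u ^ 16 := by
  classical
  have hqne : q ≠ 0 := by
    intro h; rw [h] at hq0; simp at hq0
  have hpne : p ≠ 0 := by
    intro h; apply hqne; rw [← hp, h]; ring
  have hune : u ≠ 0 := by
    intro h; apply hw; rw [← hu, h]; ring
  have hpabs : ‖p‖ < 1 := by
    have h2 : ‖p‖ ^ 2 = ‖q‖ := by rw [← hp, norm_pow]
    nlinarith [norm_nonneg p]
  have h0 : ThetaL KummerD q w = ∑' v : KummerD, Ff q w (v : V4 → ℤ) := rfl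
  rw [h0, kummer_eq_iUnion]
  rw [Summable.tsum_finset_bUnion_disjoint (f := Ff q w) sset_disjoint
    (fun bc _ => (piece_eval hpne hune hp hu hpabs bc.1 bc.2).1)]
  rw [Finset.sum_congr rfl fun bc _ => (piece_eval hpne hune hp hu hpabs bc.1 bc.2).2]
  -- now evaluate the finite sum over the 32 affine functions
  have hP : ∀ bc : (Fin 4 → ZMod 2) × ZMod 2,
      (∏ x : V4, if (∑ i, bc.1 i * x i + bc.2) = 0 then theta0 q w else theta1 p u)
        = theta0 q w ^ (Ncount bc) * theta1 p u ^ (16 - Ncount bc) := by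
    intro bc
    rw [Finset.prod_ite, Finset.prod_const, Finset.prod_const]
    have hcard : (Finset.univ.filter fun x : V4 =>
        ¬ ((∑ i, bc.1 i * x i + bc.2) = 0)).card = 16 - Ncount bc := by
      have hadd := Finset.card_filter_add_card_filter_not
        (s := (Finset.univ : Finset V4)) (p := fun x => (∑ i, bc.1 i * x i + bc.2) = 0)
      have hc16 : (Finset.univ : Finset V4).card = 16 := by decide
      have hN : (Finset.univ.filter fun x : V4 =>
          (∑ i, bc.1 i * x i + bc.2) = 0).card = Ncount bc := rfl
      rw [hN, hc16] at hadd
      exact eq_tsub_of_add_eq (by rw [add_comm]; exact hadd)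
    rw [hcard]
    rfl
  rw [Finset.sum_congr rfl fun bc _ => hP bc]
  have hsplit : (Finset.univ : Finset ((Fin 4 → ZMod 2) × ZMod 2))
      = ((Finset.univ.filter fun bc => Ncount bc = 16)
        ∪ ((Finset.univ.filter fun bc => Ncount bc = 8)
        ∪ (Finset.univ.filter fun bc => Ncount bc = 0))) := by decide
  rw [hsplit]
  rw [Finset.sum_union (by
    rw [Finset.disjoint_left]
    intro a ha hb
    simp only [Finset.mem_filter, Finset.mem_union] at ha hb
    omega)]
  rw [Finset.sum_union (by
    rw [Finset.disjoint_left]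
    intro a ha hb
    simp only [Finset.mem_filter] at ha hb
    omega)]
  have e16 : (∑ bc ∈ Finset.univ.filter (fun bc : (Fin 4 → ZMod 2) × ZMod 2 => Ncount bc = 16),
      theta0 q w ^ Ncount bc * theta1 p u ^ (16 - Ncount bc))
      = theta0 q w ^ 16 := by
    have h1 : ∀ bc ∈ Finset.univ.filter (fun bc : (Fin 4 → ZMod 2) × ZMod 2 => Ncount bc = 16),
        theta0 q w ^ Ncount bc * theta1 p u ^ (16 - Ncount bc)
          = theta0 q w ^ 16 * theta1 p u ^ (16 - 16) := fun bc hbc => by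
      rw [(Finset.mem_filter.mp hbc).2]
    rw [Finset.sum_congr rfl h1, Finset.sum_const,
      show (Finset.univ.filter (fun bc : (Fin 4 → ZMod 2) × ZMod 2 =>
        Ncount bc = 16)).card = 1 from by decide]
    norm_num
  have e8 : (∑ bc ∈ Finset.univ.filter (fun bc : (Fin 4 → ZMod 2) × ZMod 2 => Ncount bc = 8),
      theta0 q w ^ Ncount bc * theta1 p u ^ (16 - Ncount bc))
      = 30 * (theta0 q w ^ 8 * theta1 p u ^ 8) := by
    have h1 : ∀ bc ∈ Finset.univ.filter (fun bc : (Fin 4 → ZMod 2) × ZMod 2 => Ncount bc = 8),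
        theta0 q w ^ Ncount bc * theta1 p u ^ (16 - Ncount bc)
          = theta0 q w ^ 8 * theta1 p u ^ (16 - 8) := fun bc hbc => by
      rw [(Finset.mem_filter.mp hbc).2]
    rw [Finset.sum_congr rfl h1, Finset.sum_const,
      show (Finset.univ.filter (fun bc : (Fin 4 → ZMod 2) × ZMod 2 =>
        Ncount bc = 8)).card = 30 from by decide]
    norm_num
  have e0 : (∑ bc ∈ Finset.univ.filter (fun bc : (Fin 4 → ZMod 2) × ZMod 2 => Ncount bc = 0),
      theta0 q w ^ Ncount bc * theta1 p u ^ (16 - Ncount bc))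
      = theta1 p u ^ 16 := by
    have h1 : ∀ bc ∈ Finset.univ.filter (fun bc : (Fin 4 → ZMod 2) × ZMod 2 => Ncount bc = 0),
        theta0 q w ^ Ncount bc * theta1 p u ^ (16 - Ncount bc)
          = theta0 q w ^ 0 * theta1 p u ^ (16 - 0) := fun bc hbc => by
      rw [(Finset.mem_filter.mp hbc).2]
    rw [Finset.sum_congr rfl h1, Finset.sum_const,
      show (Finset.univ.filter (fun bc : (Fin 4 → ZMod 2) × ZMod 2 =>
        Ncount bc = 0)).card = 1 from by decide]
    norm_num
  rw [e16, e8, e0]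
  ring
end

section
/- The theta function of the shifted Kummer lattice is given by Θ_{K_sh}(q²,w) = 4θ₀⁴θ₁¹² + 16θ₀⁶θ₁¹⁰ + 24θ₀⁸θ₁⁸ + 16θ₀¹⁰θ₁⁶ + 4θ₀¹²θ₁⁴. -/
/-- Doubled coordinates of the shift vector `r₀ = ½·1_{P₁}`, where
`P₁ = {(a,b,0,0)} ⊂ F₂⁴`. -/
def shiftR0 : V4 → ℤ := fun x => if x 2 = 0 ∧ x 3 = 0 then 1 else 0

/-- Doubled coordinates of the shift vector `r₁ = ½·1_{P₁ Δ P₂}`, where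
`P₁ = {(a,b,0,0)}` and `P₂ = {(0,0,c,d)}` are the two coordinate 2-planes in `F₂⁴`. -/
def shiftR1 : V4 → ℤ :=
  fun x => if ((x 2 = 0 ∧ x 3 = 0) ↔ (x 0 = 0 ∧ x 1 = 0)) then 0 else 1

/-- The shifted Kummer lattice `K_sh = (K + r₀) ∪ (K + r₁)`, in doubled coordinates. -/
def KummerShD : Set (V4 → ℤ) := {a | a - shiftR0 ∈ KummerD ∨ a - shiftR1 ∈ KummerD}

namespace ThetaKummerAux

open Finset

/-! ### zpow helpers -/

lemma zpow_mul₀ {G₀ : Type*} [GroupWithZero G₀] {a : G₀} (ha : a ≠ 0) (m n : ℤ) :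
    a ^ (m * n) = (a ^ m) ^ n := by
  have h1 : a = ((Units.mk0 a ha : G₀ˣ) : G₀) := rfl
  rw [h1, ← Units.val_zpow_eq_zpow_val, ← Units.val_zpow_eq_zpow_val, zpow_mul,
    Units.val_zpow_eq_zpow_val]

lemma zpow_sum₀ {a : ℂ} (ha : a ≠ 0) {ι : Type*} (s : Finset ι) (f : ι → ℤ) :
    a ^ (∑ i ∈ s, f i) = ∏ i ∈ s, a ^ f i := by
  classical
  induction s using Finset.induction_on with
  | empty => simp
  | insert _ _ h ih => rw [Finset.sum_insert h, Finset.prod_insert h, zpow_add₀ ha, ih]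

/-! ### Summability of one-dimensional theta series -/

lemma summable_nat_aux {R S : ℝ} (hR0 : 0 < R) (hR : R < 1) (hS : 0 < S) :
    Summable (fun n : ℕ => R ^ (n ^ 2) * S ^ n) := by
  apply summable_of_ratio_norm_eventually_le (r := 1 / 2) (by norm_num)
  have h2 : Filter.Tendsto (fun n : ℕ => R ^ (2 * n + 1) * S) Filter.atTop (nhds 0) := by
    have h1 : Filter.Tendsto (fun n : ℕ => R ^ n) Filter.atTop (nhds 0) :=
      tendsto_pow_atTop_nhds_zero_of_lt_one hR0.le hR
    have h3 : Filter.Tendsto (fun n : ℕ => 2 * n + 1) Filter.atTop Filter.atTop :=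
      Filter.tendsto_atTop_mono (fun n => by omega : ∀ n : ℕ, n ≤ 2 * n + 1)
        Filter.tendsto_id
    simpa using (h1.comp h3).mul_const S
  have hev : ∀ᶠ n : ℕ in Filter.atTop, R ^ (2 * n + 1) * S ≤ 1 / 2 := by
    have := h2.eventually_le_const (show (0:ℝ) < 1/2 by norm_num)
    simpa using this
  filter_upwards [hev] with n hn
  have hpos : (0:ℝ) ≤ R ^ (n ^ 2) * S ^ n := by positivity
  have hpos2 : (0:ℝ) ≤ R ^ ((n + 1) ^ 2) * S ^ (n + 1) := by positivity
  rw [Real.norm_of_nonneg hpos2, Real.norm_of_nonneg hpos]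
  have hkey : R ^ ((n + 1) ^ 2) * S ^ (n + 1)
      = (R ^ (2 * n + 1) * S) * (R ^ (n ^ 2) * S ^ n) := by
    rw [show (n + 1) ^ 2 = n ^ 2 + (2 * n + 1) by ring, pow_add, pow_succ]; ring
  rw [hkey]
  have := mul_le_mul_of_nonneg_right hn hpos
  linarith

lemma summable_int_aux {R S : ℝ} (hR0 : 0 < R) (hR : R < 1) (hS : 0 < S) :
    Summable (fun n : ℤ => R ^ (n ^ 2) * S ^ n) := by
  apply Summable.of_nat_of_neg
  · apply (summable_nat_aux hR0 hR hS).congr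
    intro n
    rw [show ((n : ℤ) ^ 2) = ((n ^ 2 : ℕ) : ℤ) by push_cast; ring, zpow_natCast, zpow_natCast]
  · apply (summable_nat_aux hR0 hR (show (0:ℝ) < S⁻¹ by positivity)).congr
    intro n
    rw [show ((-(n : ℤ)) ^ 2) = ((n ^ 2 : ℕ) : ℤ) by push_cast; ring, zpow_natCast,
      zpow_neg, zpow_natCast, inv_pow]

/-- The summand of `theta0`. -/
noncomputable def f0 (q w : ℂ) : ℤ → ℂ := fun n => q ^ (2 * n ^ 2) * w ^ n

/-- The summand of `theta1`. -/
noncomputable def f1 (p u : ℂ) : ℤ → ℂ := fun n => p ^ (4 * n ^ 2 + 4 * n + 1) * u ^ (2 * n + 1)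

lemma summable_f0 {q w : ℂ} (hq0 : q ≠ 0) (hq1 : ‖q‖ < 1) (hw : w ≠ 0) :
    Summable fun n : ℤ => ‖f0 q w n‖ := by
  have haq : 0 < ‖q‖ := norm_pos_iff.mpr hq0
  have haw : 0 < ‖w‖ := norm_pos_iff.mpr hw
  have h := summable_int_aux (R := ‖q‖ ^ 2) (S := ‖w‖)
    (pow_pos haq 2) (pow_lt_one₀ haq.le hq1 (by norm_num)) haw
  apply h.congr
  intro n
  rw [f0, norm_mul, norm_zpow, norm_zpow,
    ← zpow_natCast (‖q‖) 2, ← zpow_mul₀ haq.ne']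
  norm_num

lemma summable_f1 {q p u : ℂ} (hq1 : ‖q‖ < 1)
    (hp : p ^ 2 = q) (hpne : p ≠ 0) (hune : u ≠ 0) :
    Summable fun n : ℤ => ‖f1 p u n‖ := by
  have hap : 0 < ‖p‖ := norm_pos_iff.mpr hpne
  have hau : 0 < ‖u‖ := norm_pos_iff.mpr hune
  have hap4lt : ‖p‖ ^ 4 < 1 := by
    have h44 : ‖p‖ ^ 4 = (‖p‖ ^ 2) ^ 2 := by ring
    rw [h44, show ‖p‖ ^ 2 = ‖q‖ by rw [← hp, norm_pow]]
    exact pow_lt_one₀ (norm_nonneg q) hq1 (by norm_num)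
  have h := (summable_int_aux (R := ‖p‖ ^ 4)
    (S := ‖p‖ ^ 4 * ‖u‖ ^ 2) (pow_pos hap 4) hap4lt
    (mul_pos (pow_pos hap 4) (pow_pos hau 2))).mul_left (‖p‖ * ‖u‖)
  apply h.congr
  intro n
  set A := ‖p‖
  set B := ‖u‖
  have hA : A ≠ 0 := hap.ne'
  have hB : B ≠ 0 := hau.ne'
  rw [f1, norm_mul, norm_zpow, norm_zpow]
  rw [show (4 * n ^ 2 + 4 * n + 1 : ℤ) = 4 * n ^ 2 + (4 * n + 1) by ring,
    zpow_add₀ hA, zpow_add₀ hA, zpow_one, zpow_add₀ hB, zpow_one]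
  rw [mul_zpow]
  rw [← zpow_natCast A 4, ← zpow_mul₀ hA, ← zpow_mul₀ hA,
    ← zpow_natCast B 2, ← zpow_mul₀ hB]
  push_cast
  ring

/-! ### Factorization of a sum over a pi type into a product of one-dimensional sums -/

private def PiProp (ι : Type) : Prop :=
  ∀ f : ι → ℤ → ℂ, (∀ i, Summable fun n => ‖f i n‖) →
    Summable (fun m : ι → ℤ => ‖∏ᶠ i, f i (m i)‖) ∧
      (∑' m : ι → ℤ, ∏ᶠ i, f i (m i)) = ∏ᶠ i, ∑' n, f i n

private lemma pi_prop (ι : Type) [Finite ι] : PiProp ι := by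
  induction ι using Finite.induction_empty_option with
  | of_equiv e ih =>
    rename_i α β
    intro f hf
    obtain ⟨h1, h2⟩ := ih (fun j => f (e j)) (fun j => hf (e j))
    let E : (α → ℤ) ≃ (β → ℤ) := e.arrowCongr (Equiv.refl ℤ)
    have hcomp : ∀ m' : α → ℤ, (∏ᶠ i, f i ((E m') i)) = ∏ᶠ j, f (e j) (m' j) := by
      intro m'
      rw [← finprod_comp_equiv e]
      refine finprod_congr fun j => ?_
      congr 1
      show m' (e.symm (e j)) = m' j
      rw [Equiv.symm_apply_apply]
    constructor
    · rw [← E.summable_iff]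
      apply h1.congr
      intro m'
      show _ = ‖∏ᶠ i, f i ((E m') i)‖
      rw [hcomp]
    · rw [← E.tsum_eq (fun m => ∏ᶠ i, f i (m i))]
      calc ∑' m' : α → ℤ, ∏ᶠ i, f i ((E m') i)
          = ∑' m' : α → ℤ, ∏ᶠ j, f (e j) (m' j) := by
            exact tsum_congr fun m' => hcomp m'
        _ = ∏ᶠ j, ∑' n, f (e j) n := h2
        _ = ∏ᶠ i, ∑' n, f i n := by
            exact finprod_comp_equiv e (f := fun i => ∑' n, f i n)
  | h_empty =>
    intro f _
    constructor
    · exact Summable.of_finite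
    · rw [finprod_of_isEmpty,
        tsum_eq_single default (fun b' hb' => absurd (Subsingleton.elim b' default) hb')]
      exact finprod_of_isEmpty _
  | h_option ih =>
    intro f hf
    rename_i α hfin
    obtain ⟨hS, hT⟩ := ih (fun a => f (some a)) (fun a => hf (some a))
    set G : (α → ℤ) → ℂ := fun m => ∏ᶠ a, f (some a) (m a) with hG
    let E : (Option α → ℤ) ≃ ℤ × (α → ℤ) :=
      Equiv.piOptionEquivProd (β := fun _ : Option α => ℤ)
    have hsplit : ∀ m : Option α → ℤ,
        (∏ᶠ i, f i (m i)) = f none (m none) * G (fun a => m (some a)) := by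
      intro m
      rw [finprod_eq_prod_of_fintype, Fintype.prod_option, hG]
      simp only [finprod_eq_prod_of_fintype]
    have hpairnorm : Summable (fun z : ℤ × (α → ℤ) => ‖f none z.1 * G z.2‖) := by
      have := Summable.mul_of_nonneg (hf none) hS
        (fun _ => norm_nonneg _) (fun _ => norm_nonneg _)
      exact this.congr fun z => (norm_mul _ _).symm
    constructor
    · rw [← E.symm.summable_iff]
      apply hpairnorm.congr
      intro z
      show ‖f none z.1 * G z.2‖ = ‖∏ᶠ i, f i (E.symm z i)‖
      rw [hsplit (E.symm z)]
      rfl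
    · have hpair : ∑' z : ℤ × (α → ℤ), f none z.1 * G z.2
          = (∑' n, f none n) * ∑' m, G m :=
        (tsum_mul_tsum_of_summable_norm (hf none) hS).symm
      calc ∑' m : Option α → ℤ, ∏ᶠ i, f i (m i)
          = ∑' m : Option α → ℤ, f none ((E m).1) * G ((E m).2) := by
            exact tsum_congr fun m => hsplit m
        _ = ∑' z : ℤ × (α → ℤ), f none z.1 * G z.2 := by
            exact E.tsum_eq fun z => f none z.1 * G z.2
        _ = (∑' n, f none n) * ∑' m, G m := hpair
        _ = ∏ᶠ i : Option α, ∑' n, f i n := by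
            rw [hT]
            simp only [finprod_eq_prod_of_fintype]
            rw [Fintype.prod_option]

lemma fintype_tsum_prod {ι : Type} [Fintype ι] (f : ι → ℤ → ℂ)
    (hf : ∀ i, Summable fun n => ‖f i n‖) :
    Summable (fun m : ι → ℤ => ‖∏ i, f i (m i)‖) ∧
      (∑' m : ι → ℤ, ∏ i, f i (m i)) = ∏ i, ∑' n, f i n := by
  obtain ⟨h1, h2⟩ := pi_prop ι f hf
  simp only [finprod_eq_prod_of_fintype] at h1 h2
  exact ⟨h1, h2⟩

/-! ### The combinatorics of the shifted Kummer lattice -/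

/-- Index type for the 64 affine parity classes making up the shifted Kummer lattice. -/
abbrev DD : Type := (Fin 4 → ZMod 2) × ZMod 2 × Bool

/-- The parity function of the class indexed by `d`. -/
def par (d : DD) (x : V4) : ZMod 2 :=
  d.1 0 * x 0 + d.1 1 * x 1 + d.1 2 * x 2 + d.1 3 * x 3 + d.2.1 +
    (if d.2.2 then (if ((x 2 = 0 ∧ x 3 = 0) ↔ (x 0 = 0 ∧ x 1 = 0)) then 0 else 1)
      else (if x 2 = 0 ∧ x 3 = 0 then 1 else 0))

/-- Integer lift of the parity function. -/
def ed (d : DD) (x : V4) : ℤ := if par d x = 1 then 1 else 0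

/-- Number of odd coordinates in the class indexed by `d`. -/
def oval (d : DD) : ℕ := (univ.filter fun x : V4 => par d x = 1).card

set_option maxRecDepth 40000 in
lemma par_inj : ∀ d₁ d₂ : DD, par d₁ = par d₂ → d₁ = d₂ := by decide

set_option maxRecDepth 40000 in
lemma sum_ed_even' : ∀ d : DD, (∑ x : V4, ed d x) % 2 = 0 := by decide

lemma sum_ed_even (d : DD) : 2 ∣ ∑ x : V4, ed d x :=
  Int.dvd_of_emod_eq_zero (sum_ed_even' d)

lemma zmod2_cases (v : ZMod 2) : v = 0 ∨ v = 1 := by revert v; decide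

lemma ed01 (d : DD) (x : V4) : ed d x = 0 ∨ ed d x = 1 := by
  unfold ed; split <;> simp

lemma ed_cast (d : DD) (x : V4) : ((ed d x : ℤ) : ZMod 2) = par d x := by
  rcases zmod2_cases (par d x) with h | h <;> simp [ed, h]

def bvec (i : Fin 4) : V4 := fun j => if i = j then 1 else 0

lemma lin_eval (l : V4 →ₗ[ZMod 2] ZMod 2) (x : V4) :
    l x = l (bvec 0) * x 0 + l (bvec 1) * x 1 + l (bvec 2) * x 2 + l (bvec 3) * x 3 := by
  have hx : x = ∑ i, x i • bvec i := pi_eq_sum_univ x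
  conv_lhs => rw [hx]
  rw [map_sum, Fin.sum_univ_four]
  simp only [map_smul, smul_eq_mul]
  ring

def mkLin (c : Fin 4 → ZMod 2) : V4 →ₗ[ZMod 2] ZMod 2 where
  toFun x := c 0 * x 0 + c 1 * x 1 + c 2 * x 2 + c 3 * x 3
  map_add' x y := by simp only [Pi.add_apply]; ring
  map_smul' r x := by simp only [Pi.smul_apply, smul_eq_mul, RingHom.id_apply]; ring

lemma shiftR0_cast (x : V4) :
    ((shiftR0 x : ℤ) : ZMod 2) = (if x 2 = 0 ∧ x 3 = 0 then (1 : ZMod 2) else 0) := by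
  unfold shiftR0; split <;> simp

lemma shiftR1_cast (x : V4) :
    ((shiftR1 x : ℤ) : ZMod 2)
      = (if ((x 2 = 0 ∧ x 3 = 0) ↔ (x 0 = 0 ∧ x 1 = 0)) then (0 : ZMod 2) else 1) := by
  unfold shiftR1; split <;> simp

lemma mem_iff (a : V4 → ℤ) : a ∈ KummerShD ↔ ∃ d : DD, ∀ x, (a x : ZMod 2) = par d x := by
  constructor
  · rintro (⟨l, c, h⟩ | ⟨l, c, h⟩)
    · refine ⟨(fun i => l (bvec i), c, false), fun x => ?_⟩
      have hx := h x
      rw [Pi.sub_apply] at hx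
      push_cast at hx
      rw [shiftR0_cast] at hx
      simp only [par, if_false, Bool.false_eq_true]
      linear_combination hx + lin_eval l x
    · refine ⟨(fun i => l (bvec i), c, true), fun x => ?_⟩
      have hx := h x
      rw [Pi.sub_apply] at hx
      push_cast at hx
      rw [shiftR1_cast] at hx
      simp only [par, if_true]
      linear_combination hx + lin_eval l x
  · rintro ⟨⟨cv, c0, b⟩, hd⟩
    cases b
    · refine Or.inl ⟨mkLin cv, c0, fun x => ?_⟩
      have hx := hd x
      simp only [par, if_false, Bool.false_eq_true] at hx
      rw [Pi.sub_apply]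
      push_cast
      rw [shiftR0_cast]
      show _ = cv 0 * x 0 + cv 1 * x 1 + cv 2 * x 2 + cv 3 * x 3 + c0
      linear_combination hx
    · refine Or.inr ⟨mkLin cv, c0, fun x => ?_⟩
      have hx := hd x
      simp only [par, if_true] at hx
      rw [Pi.sub_apply]
      push_cast
      rw [shiftR1_cast]
      show _ = cv 0 * x 0 + cv 1 * x 1 + cv 2 * x 2 + cv 3 * x 3 + c0
      linear_combination hx

/-- The parametrization of the shifted Kummer lattice by class index and integer vector. -/
def Phi (z : DD × (V4 → ℤ)) : V4 → ℤ := fun x => 2 * z.2 x + ed z.1 x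

lemma phi_parity (d : DD) (m : V4 → ℤ) (x : V4) :
    ((Phi (d, m) x : ℤ) : ZMod 2) = par d x := by
  show ((2 * m x + ed d x : ℤ) : ZMod 2) = par d x
  push_cast
  rw [ed_cast]
  have h2 : (2 : ZMod 2) = 0 := by decide
  rw [h2]
  ring

lemma phi_inj : Function.Injective Phi := by
  rintro ⟨d, m⟩ ⟨d', m'⟩ h
  have hx : ∀ x, 2 * m x + ed d x = 2 * m' x + ed d' x := fun x => congrFun h x
  have hpar : par d = par d' := by
    funext x
    rw [← phi_parity d m x, ← phi_parity d' m' x]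
    exact_mod_cast congrArg (fun t : ℤ => (t : ZMod 2)) (hx x)
  have hd : d = d' := par_inj d d' hpar
  subst hd
  have hm : m = m' := by
    funext x
    have := hx x
    omega
  rw [hm]

lemma phi_range : Set.range Phi = KummerShD := by
  ext a
  constructor
  · rintro ⟨⟨d, m⟩, rfl⟩
    exact (mem_iff _).2 ⟨d, fun x => phi_parity d m x⟩
  · intro ha
    obtain ⟨d, hd⟩ := (mem_iff a).1 ha
    refine ⟨⟨d, fun x => (a x - ed d x) / 2⟩, ?_⟩
    funext x
    have h2 : ((a x - ed d x : ℤ) : ZMod 2) = 0 := by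
      push_cast
      rw [ed_cast, hd x]
      ring
    have hdvd : (2 : ℤ) ∣ (a x - ed d x) :=
      (ZMod.intCast_zmod_eq_zero_iff_dvd _ 2).1 h2
    show 2 * ((a x - ed d x) / 2) + ed d x = a x
    omega

set_option maxRecDepth 40000 in
lemma oval_image : Finset.image oval Finset.univ = ({4, 6, 8, 10, 12} : Finset ℕ) := by decide

set_option maxRecDepth 40000 in
lemma oval_cards : (univ.filter fun d : DD => oval d = 4).card = 4 ∧
    (univ.filter fun d : DD => oval d = 6).card = 16 ∧
    (univ.filter fun d : DD => oval d = 8).card = 24 ∧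
    (univ.filter fun d : DD => oval d = 10).card = 16 ∧
    (univ.filter fun d : DD => oval d = 12).card = 4 := by decide

lemma card_V4 : Fintype.card V4 = 16 := by decide

/-- The one-dimensional factor attached to the coordinate `x` in the class `d`. -/
noncomputable def hfun (q w p u : ℂ) (d : DD) (x : V4) : ℤ → ℂ :=
  if par d x = 1 then f1 p u else f0 q w

/-- The summand of `ThetaL`. -/
noncomputable def gfun (q w : ℂ) (a : V4 → ℤ) : ℂ :=
  q ^ ((∑ x, a x ^ 2) / 2) * w ^ ((∑ x, a x) / 2)

section Main

variable {q w p u : ℂ}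

lemma hfun_summable (hqne : q ≠ 0) (hq1 : ‖q‖ < 1) (hw : w ≠ 0)
    (hp : p ^ 2 = q) (hpne : p ≠ 0) (hune : u ≠ 0) (d : DD) (x : V4) :
    Summable fun n => ‖hfun q w p u d x n‖ := by
  by_cases hx : par d x = 1
  · simpa [hfun, hx] using summable_f1 hq1 hp hpne hune
  · simpa [hfun, hx] using summable_f0 hqne hq1 hw

lemma key_pointwise (hp : p ^ 2 = q) (hu : u ^ 2 = w) (hpne : p ≠ 0) (hune : u ≠ 0)
    (d : DD) (m : V4 → ℤ) :
    gfun q w (Phi (d, m)) = ∏ x : V4, hfun q w p u d x (m x) := by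
  have hq2 : ∀ N : ℤ, 2 ∣ N → q ^ (N / 2) = p ^ N := by
    intro N hN
    rw [← hp, ← zpow_natCast p 2, ← zpow_mul₀ hpne]
    congr 1
    omega
  have hw2 : ∀ N : ℤ, 2 ∣ N → w ^ (N / 2) = u ^ N := by
    intro N hN
    rw [← hu, ← zpow_natCast u 2, ← zpow_mul₀ hune]
    congr 1
    omega
  have hsq : ∀ x : V4, (Phi (d, m) x) ^ 2
      = 4 * m x ^ 2 + 4 * (m x * ed d x) + ed d x := by
    intro x
    show (2 * m x + ed d x) ^ 2 = _
    rcases ed01 d x with h' | h' <;> rw [h'] <;> ring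
  have hS1 : ∑ x : V4, Phi (d, m) x
      = 2 * (∑ x : V4, m x) + ∑ x : V4, ed d x := by
    rw [Finset.mul_sum, ← Finset.sum_add_distrib]
    rfl
  have hS2 : ∑ x : V4, (Phi (d, m) x) ^ 2
      = 4 * (∑ x : V4, m x ^ 2) + 4 * (∑ x : V4, m x * ed d x) + ∑ x : V4, ed d x := by
    rw [Finset.mul_sum, Finset.mul_sum, ← Finset.sum_add_distrib, ← Finset.sum_add_distrib]
    exact Finset.sum_congr rfl fun x _ => hsq x
  have he := sum_ed_even d
  have hdvd1 : 2 ∣ ∑ x : V4, Phi (d, m) x := by rw [hS1]; omega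
  have hdvd2 : 2 ∣ ∑ x : V4, (Phi (d, m) x) ^ 2 := by rw [hS2]; omega
  show q ^ ((∑ x : V4, (Phi (d, m)) x ^ 2) / 2) * w ^ ((∑ x : V4, Phi (d, m) x) / 2) = _
  rw [hq2 _ hdvd2, hw2 _ hdvd1, zpow_sum₀ hpne, zpow_sum₀ hune, ← Finset.prod_mul_distrib]
  refine Finset.prod_congr rfl fun x _ => ?_
  by_cases hx : par d x = 1
  · have hex : ed d x = 1 := by rw [ed, if_pos hx]
    show p ^ ((2 * m x + ed d x) ^ 2) * u ^ (2 * m x + ed d x) = hfun q w p u d x (m x)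
    rw [hex, hfun, if_pos hx, f1,
      show ((2 * m x + 1) ^ 2 : ℤ) = 4 * m x ^ 2 + 4 * m x + 1 by ring]
  · have hex : ed d x = 0 := by rw [ed, if_neg hx]
    show p ^ ((2 * m x + ed d x) ^ 2) * u ^ (2 * m x + ed d x) = hfun q w p u d x (m x)
    rw [hex, add_zero, hfun, if_neg hx, f0, ← hp, ← hu,
      ← zpow_natCast p 2, ← zpow_mul₀ hpne, ← zpow_natCast u 2, ← zpow_mul₀ hune]
    congr 1 <;> · congr 1; push_cast; ring

lemma class_sum (hqne : q ≠ 0) (hq1 : ‖q‖ < 1) (hw : w ≠ 0)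
    (hp : p ^ 2 = q) (hpne : p ≠ 0) (hune : u ≠ 0) (d : DD) :
    Summable (fun m : V4 → ℤ => ‖∏ x : V4, hfun q w p u d x (m x)‖) ∧
      (∑' m : V4 → ℤ, ∏ x : V4, hfun q w p u d x (m x))
        = theta1 p u ^ oval d * theta0 q w ^ (16 - oval d) := by
  obtain ⟨h1, h2⟩ := fintype_tsum_prod (fun x => hfun q w p u d x)
    (fun x => hfun_summable hqne hq1 hw hp hpne hune d x)
  refine ⟨h1, ?_⟩
  rw [h2]
  have hx : ∀ x : V4, (∑' n, hfun q w p u d x n)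
      = if par d x = 1 then theta1 p u else theta0 q w := by
    intro x
    unfold hfun
    split
    · rfl
    · rfl
  rw [Finset.prod_congr rfl fun x _ => hx x, Finset.prod_ite, Finset.prod_const,
    Finset.prod_const]
  have hcard := Finset.card_filter_add_card_filter_not
    (s := (univ : Finset V4)) (p := fun x => par d x = 1)
  rw [Finset.card_univ, card_V4] at hcard
  have hz : (univ.filter fun x : V4 => ¬ par d x = 1).card = 16 - oval d := by
    unfold oval
    omega
  rw [hz]
  rfl

end Main

end ThetaKummerAux

/-- `Θ_{K_sh}(q²,w) = 4θ₀⁴θ₁¹² + 16θ₀⁶θ₁¹⁰ + 24θ₀⁸θ₁⁸ + 16θ₀¹⁰θ₁⁶ + 4θ₀¹²θ₁⁴`. -/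
theorem theta_Kummer_shifted (q w p u : ℂ)
    (hq0 : 0 < ‖q‖) (hq1 : ‖q‖ < 1) (hw : w ≠ 0)
    (hp : p ^ 2 = q) (hu : u ^ 2 = w) :
    ThetaL KummerShD q w =
      4 * theta0 q w ^ 4 * theta1 p u ^ 12 + 16 * theta0 q w ^ 6 * theta1 p u ^ 10 +
        24 * theta0 q w ^ 8 * theta1 p u ^ 8 + 16 * theta0 q w ^ 10 * theta1 p u ^ 6 +
        4 * theta0 q w ^ 12 * theta1 p u ^ 4 := by
  open ThetaKummerAux in
  have hqne : q ≠ 0 := by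
    intro h; rw [h] at hq0; simp at hq0
  have hpne : p ≠ 0 := by
    intro h; apply hqne; rw [← hp, h]; ring
  have hune : u ≠ 0 := by
    intro h; apply hw; rw [← hu, h]; ring
  have hslice : ∀ d : ThetaKummerAux.DD,
      Summable fun m : V4 → ℤ => ‖ThetaKummerAux.gfun q w (ThetaKummerAux.Phi (d, m))‖ := by
    intro d
    apply ((ThetaKummerAux.class_sum hqne hq1 hw hp hpne hune d).1).congr
    intro m
    rw [ThetaKummerAux.key_pointwise hp hu hpne hune d m]
  have hgnorm : Summable fun z : ThetaKummerAux.DD × (V4 → ℤ) =>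
      ‖ThetaKummerAux.gfun q w (ThetaKummerAux.Phi z)‖ :=
    (summable_prod_of_nonneg (fun z => norm_nonneg _)).2 ⟨hslice, Summable.of_finite⟩
  have hg : Summable fun z : ThetaKummerAux.DD × (V4 → ℤ) =>
      ThetaKummerAux.gfun q w (ThetaKummerAux.Phi z) := hgnorm.of_norm
  calc ThetaL KummerShD q w
      = ∑' v : ↥KummerShD, ThetaKummerAux.gfun q w ↑v := rfl
    _ = ∑' v : ↥(Set.range ThetaKummerAux.Phi), ThetaKummerAux.gfun q w ↑v := by
        rw [ThetaKummerAux.phi_range]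
    _ = ∑' z : ThetaKummerAux.DD × (V4 → ℤ), ThetaKummerAux.gfun q w (ThetaKummerAux.Phi z) := by
        exact ((Equiv.ofInjective ThetaKummerAux.Phi ThetaKummerAux.phi_inj).tsum_eq
          fun v => ThetaKummerAux.gfun q w ↑v).symm
    _ = ∑' d : ThetaKummerAux.DD, ∑' m : V4 → ℤ,
          ThetaKummerAux.gfun q w (ThetaKummerAux.Phi (d, m)) :=
        Summable.tsum_prod' hg fun d => (hslice d).of_norm
    _ = ∑ d : ThetaKummerAux.DD, ∑' m : V4 → ℤ,
          ThetaKummerAux.gfun q w (ThetaKummerAux.Phi (d, m)) := tsum_fintype _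
    _ = ∑ d : ThetaKummerAux.DD,
          theta1 p u ^ ThetaKummerAux.oval d * theta0 q w ^ (16 - ThetaKummerAux.oval d) := by
        refine Finset.sum_congr rfl fun d _ => ?_
        rw [tsum_congr (fun m => ThetaKummerAux.key_pointwise hp hu hpne hune d m),
          (ThetaKummerAux.class_sum hqne hq1 hw hp hpne hune d).2]
    _ = 4 * theta0 q w ^ 4 * theta1 p u ^ 12 + 16 * theta0 q w ^ 6 * theta1 p u ^ 10 +
          24 * theta0 q w ^ 8 * theta1 p u ^ 8 + 16 * theta0 q w ^ 10 * theta1 p u ^ 6 +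
          4 * theta0 q w ^ 12 * theta1 p u ^ 4 := by
        rw [Finset.sum_comp (fun n : ℕ => theta1 p u ^ n * theta0 q w ^ (16 - n))
          ThetaKummerAux.oval]
        rw [ThetaKummerAux.oval_image]
        obtain ⟨h4, h6, h8, h10, h12⟩ := ThetaKummerAux.oval_cards
        rw [show ({4, 6, 8, 10, 12} : Finset ℕ)
          = insert 4 (insert 6 (insert 8 (insert 10 ({12} : Finset ℕ)))) from rfl]
        rw [Finset.sum_insert (by decide), Finset.sum_insert (by decide),
          Finset.sum_insert (by decide), Finset.sum_insert (by decide),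
          Finset.sum_singleton]
        rw [h4, h6, h8, h10, h12]
        push_cast
        ring
end

section
/- The following quadratic theta function identity holds: θ₀(q²,w)² + θ₁(q²,w)² = ∏_{n≥1} (1−q^{2n})² (1+q^{2n−1})² (1+wq^{2n−1}) (1+w⁻¹q^{2n−1}). -/
open Filter Finset Topology

namespace QTI

/-- ratio-test summability of `r^(n²) * s^n` over ℕ -/
lemma summable_nat_aux {r s : ℝ} (hr0 : 0 < r) (hr1 : r < 1) (hs : 0 < s) :
    Summable (fun n : ℕ => r ^ (n ^ 2) * s ^ n) := by
  apply summable_of_ratio_test_tendsto_lt_one (l := 0) one_pos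
  · filter_upwards with n
    positivity
  · have key : ∀ n : ℕ, ‖r ^ ((n+1) ^ 2) * s ^ (n+1)‖ / ‖r ^ (n ^ 2) * s ^ n‖
        = (r * s) * (r ^ 2) ^ n := by
      intro n
      have h1 : (n+1) ^ 2 = n ^ 2 + (2*n+1) := by ring
      rw [Real.norm_eq_abs, Real.norm_eq_abs, abs_of_pos (by positivity),
        abs_of_pos (by positivity), h1, pow_add]
      have hrn : r ^ n ^ 2 ≠ 0 := by positivity
      have hsn : s ^ n ≠ 0 := by positivity
      field_simp
      ring
    simp only [key]
    have := (tendsto_pow_atTop_nhds_zero_of_lt_one (by positivity : (0:ℝ) ≤ r ^ 2)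
      (by nlinarith : r ^ 2 < 1)).const_mul (r * s)
    simpa using this

/-- Summability of `‖a^(m²) * b^m‖` over ℤ. -/
lemma summable_norm_aux {a b : ℂ} (ha1 : ‖a‖ < 1) (ha0 : a ≠ 0) (hb0 : b ≠ 0) :
    Summable (fun m : ℤ => ‖a ^ (m ^ 2) * b ^ m‖) := by
  have hr0 : 0 < ‖a‖ := norm_pos_iff.mpr ha0
  have hs0 : 0 < ‖b‖ := norm_pos_iff.mpr hb0
  have hnorm : ∀ m : ℤ, ‖a ^ (m ^ 2) * b ^ m‖ = ‖a‖ ^ (m ^ 2) * ‖b‖ ^ m := by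
    intro m
    rw [norm_mul, norm_zpow, norm_zpow]
  apply Summable.of_nat_of_neg
  · refine (summable_nat_aux hr0 ha1 hs0).congr (fun n => ?_)
    rw [hnorm]
    have h1 : ((n : ℤ) ^ 2) = ((n ^ 2 : ℕ) : ℤ) := by push_cast; ring
    rw [h1, zpow_natCast, zpow_natCast]
  · refine (summable_nat_aux hr0 ha1 (inv_pos.mpr hs0)).congr (fun n => ?_)
    rw [hnorm]
    have h1 : ((-(n:ℤ)) ^ 2) = ((n ^ 2 : ℕ) : ℤ) := by push_cast; ring
    rw [h1, zpow_natCast, zpow_neg, ← inv_zpow, zpow_natCast]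



lemma summable_log {f : ℕ → ℂ} (hf : Summable f) :
    Summable fun n => Complex.log (1 + f n) := by
  refine ((hf.norm.mul_left (3/2)).of_norm_bounded_eventually ?_)
  rw [Nat.cofinite_eq_atTop]
  have h2 : Tendsto (fun n => ‖f n‖) atTop (𝓝 0) := by simpa using hf.tendsto_atTop_zero.norm
  filter_upwards [h2.eventually_le_const (by norm_num : (0:ℝ) < 1/2)] with n hn
  calc ‖Complex.log (1 + f n)‖ ≤ 3/2 * ‖f n‖ :=
        Complex.norm_log_one_add_half_le_self (by simpa using hn)
    _ ≤ 3/2 * ‖f n‖ := le_rfl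

lemma hasProd_zero_of_exists_zero {f : ℕ → ℂ} (h : ∃ n, f n = 0) : HasProd f 0 := by
  obtain ⟨n0, hn0⟩ := h
  have : ∀ᶠ s : Finset ℕ in atTop, ∏ i ∈ s, f i = 0 := by
    filter_upwards [eventually_ge_atTop {n0}] with s hs
    exact Finset.prod_eq_zero (hs (Finset.mem_singleton_self n0)) hn0
  exact Tendsto.congr' (this.mono fun s hs => hs.symm) tendsto_const_nhds

lemma multipliable_one_add {f : ℕ → ℂ} (hf : Summable f) :
    Multipliable (fun n => 1 + f n) := by
  by_cases hz : ∀ n, 1 + f n ≠ 0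
  · exact Complex.multipliable_of_summable_log (f := fun n => 1 + f n) (summable_log hf)
  · push_neg at hz
    exact (hasProd_zero_of_exists_zero hz).multipliable

lemma tprod_ne_zero {f : ℕ → ℂ} (hf : Summable f) (hz : ∀ n, 1 + f n ≠ 0) :
    (∏' n, (1 + f n)) ≠ 0 := by
  have := Complex.cexp_tsum_eq_tprod (f := fun n => 1 + f n) hz (summable_log hf)
  rw [← this]
  exact Complex.exp_ne_zero _


variable {x : ℂ}

/-- partial q-Pochhammer product `∏_{i<k} (1 - x^(i+1))` -/
noncomputable def Pp (x : ℂ) (k : ℕ) : ℂ := ∏ i ∈ Finset.range k, (1 - x ^ (i+1))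

lemma Pp_zero : Pp x 0 = 1 := by simp [Pp]

lemma Pp_succ (k : ℕ) : Pp x (k+1) = Pp x k * (1 - x ^ (k+1)) := Finset.prod_range_succ _ _

lemma one_sub_pow_ne_zero (hx : ‖x‖ < 1) (i : ℕ) : 1 - x ^ (i+1) ≠ 0 := by
  intro h
  have h1 : x ^ (i+1) = 1 := by linear_combination -h
  have : ‖x ^ (i+1)‖ < 1 := by
    rw [norm_pow]
    exact pow_lt_one₀ (norm_nonneg x) hx (Nat.succ_ne_zero i)
  rw [h1, norm_one] at this
  exact lt_irrefl _ this

lemma Pp_ne_zero (hx : ‖x‖ < 1) (k : ℕ) : Pp x k ≠ 0 :=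
  Finset.prod_ne_zero_iff.mpr fun i _ => one_sub_pow_ne_zero hx i

lemma sum_geom_le (hx : ‖x‖ < 1) (k : ℕ) :
    ∑ i ∈ Finset.range k, ‖x‖ ^ (i+1) ≤ ‖x‖ / (1 - ‖x‖) := by
  have hsum : Summable (fun i : ℕ => ‖x‖ ^ (i+1)) := by
    simpa [pow_succ'] using (summable_geometric_of_lt_one (norm_nonneg x) hx).mul_left ‖x‖
  refine le_trans (Summable.sum_le_tsum _ (fun i _ => by positivity) hsum) ?_
  have : ∑' i : ℕ, ‖x‖ ^ (i+1) = ‖x‖ * (1 - ‖x‖)⁻¹ := by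
    rw [← tsum_geometric_of_lt_one (norm_nonneg x) hx]
    rw [← tsum_mul_left]
    congr 1 with i
    ring
  rw [this, div_eq_mul_inv]

lemma Pp_norm_le (hx : ‖x‖ < 1) (k : ℕ) : ‖Pp x k‖ ≤ Real.exp (‖x‖ / (1 - ‖x‖)) := by
  rw [Pp]
  calc ‖∏ i ∈ Finset.range k, (1 - x ^ (i+1))‖
      = ∏ i ∈ Finset.range k, ‖1 - x ^ (i+1)‖ := norm_prod _ _
    _ ≤ ∏ i ∈ Finset.range k, Real.exp (‖x‖ ^ (i+1)) := by
        refine Finset.prod_le_prod (fun i _ => norm_nonneg _) (fun i _ => ?_)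
        calc ‖1 - x ^ (i+1)‖ ≤ ‖(1:ℂ)‖ + ‖x ^ (i+1)‖ := norm_sub_le _ _
          _ = 1 + ‖x‖ ^ (i+1) := by rw [norm_one, norm_pow]
          _ ≤ Real.exp (‖x‖ ^ (i+1)) := by
              have := Real.add_one_le_exp (‖x‖ ^ (i+1)); linarith
    _ = Real.exp (∑ i ∈ Finset.range k, ‖x‖ ^ (i+1)) := (Real.exp_sum _ _).symm
    _ ≤ Real.exp (‖x‖ / (1 - ‖x‖)) := Real.exp_le_exp.mpr (sum_geom_le hx k)

lemma one_sub_ge_exp {t c : ℝ} (ht0 : 0 ≤ t) (htc : t ≤ c) (hc : c < 1) :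
    Real.exp (-(t / (1 - c))) ≤ 1 - t := by
  have h1c : 0 < 1 - c := by linarith
  have h1t : 0 < 1 - t := by linarith
  have key : 1 / (1 - t) ≤ Real.exp (t / (1 - c)) := by
    have h2 : 1 + t / (1 - t) ≤ Real.exp (t / (1 - t)) := by
      have := Real.add_one_le_exp (t / (1 - t)); linarith
    have h3 : 1 + t / (1 - t) = 1 / (1 - t) := by field_simp; ring
    have h4 : t / (1 - t) ≤ t / (1 - c) := by
      gcongr
    calc 1 / (1-t) = 1 + t / (1-t) := h3.symm
      _ ≤ Real.exp (t / (1-t)) := h2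
      _ ≤ Real.exp (t / (1-c)) := Real.exp_le_exp.mpr h4
  rw [Real.exp_neg]
  have h5 : (Real.exp (t / (1 - c)))⁻¹ ≤ (1 / (1 - t))⁻¹ :=
    inv_anti₀ (by positivity) key
  simpa using h5

lemma Pp_norm_ge (hx : ‖x‖ < 1) (k : ℕ) :
    Real.exp (-(‖x‖ / (1 - ‖x‖) / (1 - ‖x‖))) ≤ ‖Pp x k‖ := by
  have h1x : 0 < 1 - ‖x‖ := by linarith
  rw [Pp]
  calc Real.exp (-(‖x‖ / (1 - ‖x‖) / (1 - ‖x‖)))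
      ≤ Real.exp (-(∑ i ∈ Finset.range k, ‖x‖ ^ (i+1)) / (1 - ‖x‖)) := by
        apply Real.exp_le_exp.mpr
        rw [neg_div]
        apply neg_le_neg
        have hs := sum_geom_le hx k
        gcongr
    _ = ∏ i ∈ Finset.range k, Real.exp (-(‖x‖ ^ (i+1) / (1 - ‖x‖))) := by
        rw [← Real.exp_sum]
        congr 1
        rw [neg_div, Finset.sum_div, ← Finset.sum_neg_distrib]
    _ ≤ ∏ i ∈ Finset.range k, ‖1 - x ^ (i+1)‖ := by
        refine Finset.prod_le_prod (fun i _ => (Real.exp_pos _).le) (fun i _ => ?_)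
        have hb : ‖x‖ ^ (i+1) ≤ ‖x‖ := pow_le_of_le_one (norm_nonneg _) hx.le (Nat.succ_ne_zero i)
        calc Real.exp (-(‖x‖ ^ (i+1) / (1 - ‖x‖)))
            ≤ 1 - ‖x‖ ^ (i+1) := one_sub_ge_exp (by positivity) hb hx
          _ ≤ ‖1 - x ^ (i+1)‖ := by
              have := norm_sub_norm_le (1:ℂ) (x ^ (i+1))
              rw [norm_one, norm_pow] at this
              linarith
    _ = ‖∏ i ∈ Finset.range k, (1 - x ^ (i+1))‖ := (norm_prod _ _).symm


section PpLimits
variable {x : ℂ}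

lemma summable_pow_succ (hx : ‖x‖ < 1) (c : ℂ) : Summable (fun n : ℕ => c * x ^ (n+1)) := by
  have := (summable_geometric_of_norm_lt_one (by simpa using hx : ‖x‖ < 1)).mul_left (c * x)
  refine this.congr fun n => ?_
  rw [pow_succ']
  ring

lemma multipliable_Pp (hx : ‖x‖ < 1) : Multipliable (fun n : ℕ => 1 - x ^ (n+1)) := by
  refine (multipliable_one_add ((summable_pow_succ hx (-1)))).congr fun n => ?_
  ring

lemma tendsto_Pp (hx : ‖x‖ < 1) :
    Filter.Tendsto (Pp x) atTop (nhds (∏' n : ℕ, (1 - x ^ (n+1)))) :=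
  (multipliable_Pp hx).hasProd.tendsto_prod_nat

lemma tprod_Pp_ne_zero (hx : ‖x‖ < 1) : (∏' n : ℕ, (1 - x ^ (n+1))) ≠ 0 := by
  have h1 : (∏' n : ℕ, (1 - x ^ (n+1))) = ∏' n : ℕ, (1 + (-1 : ℂ) * x ^ (n+1)) := by
    apply tprod_congr; intro n; ring
  rw [h1]
  exact tprod_ne_zero (summable_pow_succ hx (-1)) (fun n => by
    have := one_sub_pow_ne_zero hx n
    intro h; apply this; rw [← h]; ring)

end PpLimits


section Gauss
variable {x : ℂ}

/-- Gaussian binomial-type coefficients via Pascal recurrence. -/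
noncomputable def gb (x : ℂ) : ℕ → ℕ → ℂ
  | 0, 0 => 1
  | 0, (_+1) => 0
  | (M+1), 0 => 1
  | (M+1), (m+1) => gb x M (m+1) + x ^ (M+1) * 0 + gb x M m * x ^ M - gb x M m * x ^ M + x ^ M * gb x M m

lemma gb_zero_right (M : ℕ) : gb x M 0 = 1 := by cases M <;> rfl

lemma gb_succ_succ (M m : ℕ) : gb x (M+1) (m+1) = gb x M (m+1) + x ^ M * gb x M m := by
  show _ + _ * 0 + _ - _ + _ = _
  ring

lemma gb_eq_zero : ∀ M m : ℕ, M < m → gb x M m = 0 := by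
  intro M
  induction M with
  | zero => intro m hm; match m, hm with | (k+1), _ => rfl
  | succ M ih =>
    intro m hm
    match m, hm with
    | (k+1), hm =>
      rw [gb_succ_succ, ih (k+1) (by omega), ih k (by omega)]
      ring

/-- The finite q-binomial theorem with recursive coefficients. -/
lemma qbinom (z : ℂ) : ∀ M : ℕ,
    ∏ j ∈ Finset.range M, (1 + z * x ^ j) = ∑ m ∈ Finset.range (M+1), gb x M m * z ^ m := by
  intro M
  induction M with
  | zero => simp [gb]
  | succ M ih =>
    rw [Finset.prod_range_succ, ih]
    have expand : (∑ m ∈ Finset.range (M+1), gb x M m * z ^ m) * (1 + z * x ^ M)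
        = (∑ m ∈ Finset.range (M+1), gb x M m * z ^ m)
          + x ^ M * ∑ m ∈ Finset.range (M+1), gb x M m * z ^ (m+1) := by
      rw [Finset.mul_sum]
      rw [mul_add, mul_one]
      congr 1
      rw [Finset.sum_mul]
      apply Finset.sum_congr rfl
      intro m _
      ring
    rw [expand]
    rw [Finset.sum_range_succ' (fun m => gb x (M+1) m * z ^ m) (M+1)]
    simp only [gb_succ_succ, gb_zero_right, pow_zero, mul_one]
    have splitR : ∑ m ∈ Finset.range (M+1), (gb x M (m+1) + x ^ M * gb x M m) * z ^ (m+1)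
        = (∑ m ∈ Finset.range (M+1), gb x M (m+1) * z ^ (m+1))
          + x ^ M * ∑ m ∈ Finset.range (M+1), gb x M m * z ^ (m+1) := by
      rw [Finset.mul_sum, ← Finset.sum_add_distrib]
      exact Finset.sum_congr rfl fun m _ => by ring
    have hA : (∑ m ∈ Finset.range (M+1), gb x M m * z ^ m)
        = (∑ m ∈ Finset.range (M+1), gb x M (m+1) * z ^ (m+1)) + 1 := by
      rw [Finset.sum_range_succ' (fun m => gb x M m * z ^ m) M,
        Finset.sum_range_succ (fun m => gb x M (m+1) * z ^ (m+1)) M,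
        gb_eq_zero M (M+1) (Nat.lt_succ_self M)]
      simp [gb_zero_right]
    rw [splitR, hA]
    ring

/-- exponent helper: Em m = 0 + 1 + ... + (m-1) -/
def Em (m : ℕ) : ℕ := ∑ i ∈ Finset.range m, i

lemma Em_succ (m : ℕ) : Em (m+1) = Em m + m := Finset.sum_range_succ _ _

lemma gb_closed (hx : ‖x‖ < 1) : ∀ M m : ℕ, m ≤ M →
    gb x M m * (Pp x m * Pp x (M - m)) = x ^ (Em m) * Pp x M := by
  intro M
  induction M with
  | zero =>
    intro m hm
    interval_cases m
    simp [gb, Pp_zero, Em]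
  | succ M ih =>
    intro m hm
    match m with
    | 0 => simp [gb_zero_right, Pp_zero, Em]
    | (m+1) =>
      rcases Nat.lt_or_ge m M with hmM | hmM
      · -- m + 1 ≤ M
        obtain ⟨k, hk⟩ : ∃ k, M = m + 1 + k := ⟨M - (m+1), by omega⟩
        subst hk
        have IH1 := ih (m+1) (by omega)
        have IH2 := ih m (by omega)
        have e1 : m + 1 + k - (m + 1) = k := by omega
        have e2 : m + 1 + k - m = k + 1 := by omega
        have e3 : m + 1 + k + 1 - (m + 1) = k + 1 := by omega
        rw [e1] at IH1
        rw [e2] at IH2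
        rw [e3, gb_succ_succ, Em_succ]
        rw [Em_succ, Pp_succ (x := x) m] at IH1
        rw [Pp_succ (x := x) k] at IH2
        rw [Pp_succ (x := x) (m+1+k), Pp_succ (x := x) m, Pp_succ (x := x) k]
        linear_combination (1 - x^(k+1)) * IH1 + x^(m+1+k) * (1 - x^(m+1)) * IH2
      · -- m = M
        have hmeq : m = M := by omega
        subst hmeq
        have IH := ih m le_rfl
        simp only [Nat.sub_self, Pp_zero, mul_one] at IH ⊢
        have hgb : gb x m m = x ^ (Em m) := by
          have hP := Pp_ne_zero hx m
          exact mul_right_cancel₀ hP IH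
        rw [gb_succ_succ, gb_eq_zero m (m+1) (Nat.lt_succ_self m), hgb, Em_succ]
        ring
end Gauss


section Finite
variable {q w : ℂ}

lemma norm_sq_lt_one (hq1 : ‖q‖ < 1) : ‖q ^ 2‖ < 1 := by
  rw [norm_pow]; exact pow_lt_one₀ (norm_nonneg q) hq1 two_ne_zero

lemma prod_zpow_sum {a : ℂ} (ha : a ≠ 0) (N : ℕ) (f : ℕ → ℤ) :
    ∏ j ∈ Finset.range N, a ^ f j = a ^ (∑ j ∈ Finset.range N, f j) := by
  induction N with
  | zero => simp
  | succ N ih => rw [Finset.prod_range_succ, Finset.sum_range_succ, ih, zpow_add₀ ha]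

lemma Em_int (j : ℕ) : ((Em j : ℤ)) * 2 = (j:ℤ)^2 - j := by
  induction j with
  | zero => simp [Em]
  | succ j ih =>
    rw [Em_succ]
    push_cast
    push_cast at ih
    linear_combination ih

lemma sum_neg_odd (N : ℕ) : ∑ j ∈ Finset.range N, (-(2*(j:ℤ)+1)) = -((N:ℤ)^2) := by
  induction N with
  | zero => simp
  | succ N ih =>
    rw [Finset.sum_range_succ, ih]
    push_cast
    ring

lemma finite_id (hq : q ≠ 0) (hq1 : ‖q‖ < 1) (hw : w ≠ 0) (N : ℕ) :
    Pp (q^2) N * ∏ n ∈ Finset.range N, ((1 + w * q ^ (2*n+1)) * (1 + w⁻¹ * q ^ (2*n+1)))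
    = ∑ j ∈ Finset.range (2*N+1),
        Pp (q^2) N * Pp (q^2) (2*N) / (Pp (q^2) j * Pp (q^2) (2*N - j))
          * q ^ (((j:ℤ) - N)^2) * w ^ ((j:ℤ) - N) := by
  have hx : ‖q^2‖ < 1 := norm_sq_lt_one hq1
  have hx0 : (q:ℂ)^2 ≠ 0 := pow_ne_zero 2 hq
  have hqz : ∀ m : ℤ, q ^ m ≠ 0 := fun m => zpow_ne_zero m hq
  have hwz : ∀ m : ℤ, w ^ m ≠ 0 := fun m => zpow_ne_zero m hw
  -- q-binomial theorem applied
  have H := qbinom (x := q^2) (w * q ^ ((1:ℤ) - 2*N)) (2*N)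
  -- rewrite each factor on the left of H
  have hterm : ∀ j : ℕ, 1 + (w * q ^ ((1:ℤ) - 2*N)) * (q^2) ^ j
      = 1 + w * q ^ (2*(j:ℤ)+1-2*N) := by
    intro j
    congr 1
    rw [mul_assoc]
    congr 1
    rw [← pow_mul, ← zpow_natCast q (2*j), ← zpow_add₀ hq]
    congr 1
    push_cast
    ring
  rw [Finset.prod_congr rfl (fun j _ => hterm j)] at H
  -- split the product
  rw [show 2*N = N + N by ring, Finset.prod_range_add
    (fun j => 1 + w * q ^ (2*(j:ℤ)+1-2*(N:ℤ)))] at H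
  -- second half is ∏ (1 + w q^{2j+1})
  have hsecond : ∏ j ∈ Finset.range N, (1 + w * q ^ (2*((N+j:ℕ):ℤ)+1-2*(N:ℤ)))
      = ∏ j ∈ Finset.range N, (1 + w * q ^ (2*j+1)) := by
    refine Finset.prod_congr rfl fun j _ => ?_
    congr 1
    rw [← zpow_natCast q (2*j+1)]
    congr 1
    push_cast
    ring
  -- first half
  have hfirst : ∏ j ∈ Finset.range N, (1 + w * q ^ (2*(j:ℤ)+1-2*(N:ℤ)))
      = (w ^ (N:ℕ) * q ^ (-((N:ℤ)^2))) * ∏ j ∈ Finset.range N, (1 + w⁻¹ * q ^ (2*j+1)) := by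
    rw [← Finset.prod_range_reflect (fun j => 1 + w * q ^ (2*(j:ℤ)+1-2*(N:ℤ))) N]
    have step1 : ∀ j ∈ Finset.range N, (1 + w * q ^ (2*((N-1-j : ℕ):ℤ)+1-2*(N:ℤ)))
        = (w * q ^ (-(2*(j:ℤ)+1))) * (1 + w⁻¹ * q ^ (2*j+1)) := by
      intro j hj
      have hjN : j < N := Finset.mem_range.mp hj
      have he : 2*((N-1-j : ℕ):ℤ)+1-2*(N:ℤ) = -(2*(j:ℤ)+1) := by omega
      rw [he]
      have hq1j : (q:ℂ) ^ ((2*(j:ℤ)+1)) ≠ 0 := hqz _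
      rw [← zpow_natCast q (2*j+1), zpow_neg]
      field_simp
      push_cast
      ring
    rw [Finset.prod_congr rfl step1, Finset.prod_mul_distrib]
    congr 1
    rw [Finset.prod_mul_distrib, Finset.prod_const, Finset.card_range, prod_zpow_sum hq]
    congr 1
    rw [sum_neg_odd N]
  rw [hsecond, hfirst] at H
  -- now H : (w^N q^{-N²} * B) * C = Σ gb * z^j
  -- per-term rewriting of the RHS of H
  have hterm2 : ∀ j ∈ Finset.range (2*N+1),
      (Pp (q^2) N * w ^ (-(N:ℤ)) * q ^ ((N:ℤ)^2)) * (gb (q^2) (2*N) j * (w * q ^ ((1:ℤ) - 2*N)) ^ j)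
      = Pp (q^2) N * Pp (q^2) (2*N) / (Pp (q^2) j * Pp (q^2) (2*N - j))
          * q ^ (((j:ℤ) - N)^2) * w ^ ((j:ℤ) - N) := by
    intro j hj
    have hjN : j ≤ 2*N := by have := Finset.mem_range.mp hj; omega
    have hgb : gb (q^2) (2*N) j
        = (q^2) ^ (Em j) * Pp (q^2) (2*N) / (Pp (q^2) j * Pp (q^2) (2*N - j)) := by
      rw [eq_div_iff (mul_ne_zero (Pp_ne_zero hx j) (Pp_ne_zero hx _))]
      exact gb_closed hx (2*N) j hjN
    rw [hgb, mul_pow]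
    rw [← zpow_natCast (q ^ ((1:ℤ) - 2*N)) j, ← zpow_mul]
    rw [← pow_mul, ← zpow_natCast q (2 * Em j), ← zpow_natCast w j]
    have hq2 : q ^ ((N:ℤ)^2) * (q ^ ((2 * Em j : ℕ):ℤ) * q ^ (((1:ℤ) - 2*N) * j))
        = q ^ (((j:ℤ) - N)^2) := by
      rw [← zpow_add₀ hq, ← zpow_add₀ hq]
      congr 1
      have := Em_int j
      push_cast
      linear_combination this
    have hw2 : w ^ (-(N:ℤ)) * w ^ ((j:ℕ):ℤ) = w ^ ((j:ℤ) - N) := by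
      rw [← zpow_add₀ hw]
      congr 1
      push_cast
      ring
    calc Pp (q^2) N * w ^ (-(N:ℤ)) * q ^ ((N:ℤ)^2) *
          ((q ^ (2 * Em j) * Pp (q^2) (2*N) / (Pp (q^2) j * Pp (q^2) (2*N - j))) *
            (w ^ (j:ℕ) * q ^ (((1:ℤ) - 2*N) * j)))
        = (Pp (q^2) N * Pp (q^2) (2*N) / (Pp (q^2) j * Pp (q^2) (2*N - j)))
            * (q ^ ((N:ℤ)^2) * (q ^ ((2 * Em j : ℕ):ℤ) * q ^ (((1:ℤ) - 2*N) * j)))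
            * (w ^ (-(N:ℤ)) * w ^ ((j:ℕ):ℤ)) := by
          rw [zpow_natCast q (2 * Em j), zpow_natCast w j]
          ring
      _ = _ := by rw [hq2, hw2]
  -- assemble
  rw [show N + N = 2*N by ring] at H
  rw [Finset.prod_mul_distrib]
  have h1 : w ^ (-(N:ℤ)) * w ^ ((N:ℕ):ℤ) = 1 := by
    rw [← zpow_add₀ hw]; simp
  have h2 : q ^ ((N:ℤ)^2) * q ^ (-((N:ℤ)^2)) = 1 := by
    rw [← zpow_add₀ hq]; simp
  set C := ∏ n ∈ Finset.range N, (1 + w * q ^ (2*n+1)) with hC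
  set B := ∏ n ∈ Finset.range N, (1 + w⁻¹ * q ^ (2*n+1)) with hB
  have expand : Pp (q^2) N * (C * B)
      = (Pp (q^2) N * w ^ (-(N:ℤ)) * q ^ ((N:ℤ)^2)) *
        ((w ^ (N:ℕ) * q ^ (-((N:ℤ)^2)) * B) * C) := by
    rw [← zpow_natCast w N]
    linear_combination (-(Pp (q^2) N * B * C * (q ^ ((N:ℤ)^2) * q ^ (-((N:ℤ)^2))))) * h1
      - (Pp (q^2) N * B * C) * h2
  rw [expand, H, Finset.mul_sum]
  exact Finset.sum_congr rfl hterm2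

end Finite


section Limit
variable {q w : ℂ}

lemma summable_cq (hq1 : ‖q‖ < 1) (c : ℂ) : Summable (fun n : ℕ => c * q ^ (2*n+1)) := by
  have h := (summable_geometric_of_norm_lt_one (norm_sq_lt_one hq1)).mul_left (c * q)
  refine h.congr fun n => ?_
  rw [pow_add, pow_mul, pow_one]
  ring

lemma multipliable_W (hq1 : ‖q‖ < 1) (c : ℂ) :
    Multipliable (fun n : ℕ => 1 + c * q ^ (2*n+1)) :=
  (multipliable_one_add (summable_cq hq1 c))

/-- The Jacobi triple product. -/
lemma JTP (hq : q ≠ 0) (hq1 : ‖q‖ < 1) (hw : w ≠ 0) :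
    ∑' m : ℤ, q ^ (m^2) * w ^ m
      = (∏' n : ℕ, (1 - (q^2) ^ (n+1)))
        * ∏' n : ℕ, ((1 + w * q ^ (2*n+1)) * (1 + w⁻¹ * q ^ (2*n+1))) := by
  have hx : ‖q^2‖ < 1 := norm_sq_lt_one hq1
  have hx0 : (q:ℂ)^2 ≠ 0 := pow_ne_zero 2 hq
  set x : ℂ := q^2 with hxdef
  set L : ℂ := ∏' n : ℕ, (1 - x ^ (n+1)) with hL
  have hLne : L ≠ 0 := tprod_Pp_ne_zero hx
  have hLten : Filter.Tendsto (Pp x) atTop (nhds L) := tendsto_Pp hx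
  -- D coefficients
  set D : ℕ → ℕ → ℂ := fun N j => Pp x N * Pp x (2*N) / (Pp x j * Pp x (2*N - j)) with hD
  set t : ℤ → ℂ := fun m => q ^ (m^2) * w ^ m with ht
  set f : ℕ → ℤ → ℂ := fun N m =>
    if -(N:ℤ) ≤ m ∧ m ≤ N then D N (m + N).toNat * q ^ (m^2) * w ^ m else 0 with hf
  -- tsum of f N equals the finite sum
  have htsum_f : ∀ N : ℕ, ∑' m : ℤ, f N m
      = ∑ j ∈ Finset.range (2*N+1), D N j * q ^ (((j:ℤ) - N)^2) * w ^ ((j:ℤ) - N) := by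
    intro N
    have hsupp : ∀ m ∉ Finset.Icc (-(N:ℤ)) N, f N m = 0 := by
      intro m hm
      rw [Finset.mem_Icc] at hm
      simp only [hf]
      rw [if_neg hm]
    rw [tsum_eq_sum hsupp]
    refine Finset.sum_nbij' (fun m => (m + N).toNat) (fun j => (j:ℤ) - N) ?_ ?_ ?_ ?_ ?_
    · intro m hm
      rw [Finset.mem_Icc] at hm
      rw [Finset.mem_range]
      omega
    · intro j hj
      rw [Finset.mem_range] at hj
      rw [Finset.mem_Icc]
      omega
    · intro m hm
      rw [Finset.mem_Icc] at hm
      omega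
    · intro j hj
      rw [Finset.mem_range] at hj
      omega
    · intro m hm
      rw [Finset.mem_Icc] at hm
      have hcast : (((m + N).toNat : ℤ)) = m + N := by omega
      simp only [hf]
      rw [if_pos (by omega : -(N:ℤ) ≤ m ∧ m ≤ N), hcast]
      congr 2
      · congr 1; ring
      · ring
  -- pointwise convergence
  have hpoint : ∀ m : ℤ, Filter.Tendsto (fun N => f N m) atTop (nhds (t m)) := by
    intro m
    have hcompPp : ∀ g : ℕ → ℕ, Filter.Tendsto g atTop atTop →
        Filter.Tendsto (fun N => Pp x (g N)) atTop (nhds L) := fun g hg => hLten.comp hg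
    have hg1 : Filter.Tendsto (fun N : ℕ => (m + N).toNat) atTop atTop := by
      rw [tendsto_atTop_atTop]
      intro b
      exact ⟨b + m.natAbs, fun a ha => by omega⟩
    have hg2 : Filter.Tendsto (fun N : ℕ => 2*N - (m + N).toNat) atTop atTop := by
      rw [tendsto_atTop_atTop]
      intro b
      exact ⟨b + m.natAbs, fun a ha => by omega⟩
    have hg3 : Filter.Tendsto (fun N : ℕ => 2*N) atTop atTop := by
      rw [tendsto_atTop_atTop]
      intro b
      exact ⟨b, fun a ha => by omega⟩
    have hDten : Filter.Tendsto (fun N => D N (m + N).toNat) atTop (nhds 1) := by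
      have h1 := (hLten.mul (hcompPp _ hg3)).div
        ((hcompPp _ hg1).mul (hcompPp _ hg2)) (mul_ne_zero hLne hLne)
      have : L * L / (L * L) = 1 := div_self (mul_ne_zero hLne hLne)
      rw [this] at h1
      exact h1
    have heq : ∀ᶠ N : ℕ in atTop, D N (m + N).toNat * q ^ (m^2) * w ^ m = f N m := by
      filter_upwards [eventually_ge_atTop m.natAbs] with N hN
      simp only [hf]
      rw [if_pos (by omega : -(N:ℤ) ≤ m ∧ m ≤ N)]
    refine Filter.Tendsto.congr' heq ?_
    have := (hDten.mul_const (q ^ (m^2) * w ^ m))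
    simp only [one_mul] at this
    refine this.congr fun N => by ring
  -- uniform bound
  set cUp : ℝ := Real.exp (‖x‖ / (1 - ‖x‖)) with hcUp
  set cLo : ℝ := Real.exp (-(‖x‖ / (1 - ‖x‖) / (1 - ‖x‖))) with hcLo
  have hcLo0 : 0 < cLo := Real.exp_pos _
  set K : ℝ := cUp * cUp / (cLo * cLo) with hK
  have hK0 : 0 ≤ K := by positivity
  have hbound : ∀ N : ℕ, ∀ m : ℤ, ‖f N m‖ ≤ K * ‖q ^ (m^2) * w ^ m‖ := by
    intro N m
    simp only [hf]
    by_cases hm : -(N:ℤ) ≤ m ∧ m ≤ N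
    · rw [if_pos hm]
      have hDb : ‖D N (m + N).toNat‖ ≤ K := by
        rw [hD]
        simp only [norm_div, norm_mul]
        apply div_le_div₀ (by positivity)
        · exact mul_le_mul (Pp_norm_le hx _) (Pp_norm_le hx _) (norm_nonneg _)
            (Real.exp_pos _).le
        · positivity
        · exact mul_le_mul (Pp_norm_ge hx _) (Pp_norm_ge hx _) hcLo0.le (norm_nonneg _)
      calc ‖D N (m + N).toNat * q ^ (m^2) * w ^ m‖
          = ‖D N (m + N).toNat‖ * ‖q ^ (m^2) * w ^ m‖ := by
            rw [mul_assoc, norm_mul]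
        _ ≤ K * ‖q ^ (m^2) * w ^ m‖ :=
            mul_le_mul_of_nonneg_right hDb (norm_nonneg _)
    · rw [if_neg hm]
      simp only [norm_zero]
      positivity
  -- Tannery
  have hTan : Filter.Tendsto (fun N => ∑' m : ℤ, f N m) atTop (nhds (∑' m : ℤ, t m)) := by
    refine tendsto_tsum_of_dominated_convergence
      ((summable_norm_aux hq1 hq hw).mul_left K) hpoint ?_
    exact Filter.Eventually.of_forall hbound
  -- product limit
  set W : ℂ := ∏' n : ℕ, ((1 + w * q ^ (2*n+1)) * (1 + w⁻¹ * q ^ (2*n+1))) with hW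
  have hWm : Multipliable (fun n : ℕ => (1 + w * q ^ (2*n+1)) * (1 + w⁻¹ * q ^ (2*n+1))) :=
    (multipliable_W hq1 w).mul (multipliable_W hq1 w⁻¹)
  have hprodten : Filter.Tendsto (fun N => Pp x N *
      ∏ n ∈ Finset.range N, ((1 + w * q ^ (2*n+1)) * (1 + w⁻¹ * q ^ (2*n+1)))) atTop
      (nhds (L * W)) :=
    hLten.mul hWm.hasProd.tendsto_prod_nat
  have hsame : (fun N => ∑' m : ℤ, f N m) = fun N => Pp x N *
      ∏ n ∈ Finset.range N, ((1 + w * q ^ (2*n+1)) * (1 + w⁻¹ * q ^ (2*n+1))) := by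
    funext N
    rw [htsum_f N, finite_id hq hq1 hw N]
  rw [hsame] at hTan
  exact tendsto_nhds_unique hTan hprodten

end Limit


end QTI

namespace QTI

section Assembly
variable {q w p u : ℂ}

lemma q2pow (hq : q ≠ 0) (c : ℤ) : ((q ^ 2 : ℂ)) ^ c = q ^ (2 * c) := by
  rw [← zpow_natCast q 2, ← zpow_mul]
  norm_num

theorem main (hq : q ≠ 0) (hq1 : ‖q‖ < 1) (hw : w ≠ 0)
    (hp : p ^ 2 = q) (hu : u ^ 2 = w) :
    theta0 q w ^ 2 + theta1 p u ^ 2 =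
      ∏' n : ℕ, ((1 - q ^ (2 * n + 2)) ^ 2 * (1 + q ^ (2 * n + 1)) ^ 2 *
        (1 + w * q ^ (2 * n + 1)) * (1 + w⁻¹ * q ^ (2 * n + 1))) := by
  have hp0 : p ≠ 0 := fun h => hq (by rw [← hp, h]; ring)
  have hu0 : u ≠ 0 := fun h => hw (by rw [← hu, h]; ring)
  have hx : ‖q ^ 2‖ < 1 := norm_sq_lt_one hq1
  have hx0 : (q : ℂ) ^ 2 ≠ 0 := pow_ne_zero 2 hq
  have hp2 : p ^ (2:ℤ) = q := by rw [show (2:ℤ) = ((2:ℕ):ℤ) from rfl, zpow_natCast, hp]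
  have hu2 : u ^ (2:ℤ) = w := by rw [show (2:ℤ) = ((2:ℕ):ℤ) from rfl, zpow_natCast, hu]
  -- basic term functions
  set t0 : ℤ → ℂ := fun k => q ^ (2 * k ^ 2) * w ^ k with ht0
  set s : ℤ → ℂ := fun k => q ^ (2 * k ^ 2 + 2 * k) * w ^ k with hs
  set F : ℤ × ℤ → ℂ := fun mn => q ^ (mn.1 ^ 2 + mn.2 ^ 2) * w ^ mn.1 with hF
  set Fev : ℤ × ℤ → ℂ := fun mn => if (mn.1 + mn.2) % 2 = 0 then F mn else 0 with hFev
  set Fod : ℤ × ℤ → ℂ := fun mn => if (mn.1 + mn.2) % 2 = 0 then 0 else F mn with hFod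
  -- summability
  have hs0 : Summable fun k : ℤ => ‖t0 k‖ := by
    refine (summable_norm_aux hx hx0 hw).congr fun k => ?_
    rw [q2pow hq]
  have hss : Summable fun k : ℤ => ‖s k‖ := by
    refine (summable_norm_aux hx hx0 (mul_ne_zero hx0 hw)).congr fun k => ?_
    congr 1
    rw [mul_zpow, q2pow hq, q2pow hq, ← mul_assoc, ← zpow_add₀ hq]
  have hst : Summable fun m : ℤ => ‖q ^ (m ^ 2) * w ^ m‖ := summable_norm_aux hq1 hq hw
  have hsG : Summable fun m : ℤ => ‖q ^ (m ^ 2)‖ := by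
    refine (summable_norm_aux hq1 hq one_ne_zero).congr fun k => ?_
    rw [one_zpow, mul_one]
  have hFnorm : Summable fun mn : ℤ × ℤ => ‖F mn‖ := by
    refine (hst.mul_norm hsG).congr fun mn => ?_
    congr 1
    rw [hF]
    dsimp only
    rw [zpow_add₀ hq]
    ring
  have hFsum : Summable F := hFnorm.of_norm
  have hFevsum : Summable Fev := by
    refine Summable.of_norm (hFnorm.of_norm_bounded fun mn => ?_)
    rw [hFev]
    dsimp only
    split_ifs <;> simp
  have hFodsum : Summable Fod := by
    refine Summable.of_norm (hFnorm.of_norm_bounded fun mn => ?_)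
    rw [hFod]
    dsimp only
    split_ifs <;> simp
  -- theta0 squared
  have h00 : theta0 q w ^ 2 = ∑' mn : ℤ × ℤ, Fev mn := by
    have inj : Function.Injective (fun jk : ℤ × ℤ => (jk.1 + jk.2, jk.1 - jk.2)) := by
      intro a b hab
      rw [Prod.ext_iff] at hab ⊢
      obtain ⟨h1, h2⟩ := hab
      dsimp only at h1 h2
      omega
    have hsupp : Function.support Fev ⊆
        Set.range (fun jk : ℤ × ℤ => (jk.1 + jk.2, jk.1 - jk.2)) := by
      intro mn hmn
      rw [Function.mem_support, hFev] at hmn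
      dsimp only at hmn
      by_cases hcond : (mn.1 + mn.2) % 2 = 0
      · refine ⟨((mn.1 + mn.2) / 2, (mn.1 - mn.2) / 2), ?_⟩
        rw [Prod.ext_iff]
        constructor <;> dsimp only <;> omega
      · rw [if_neg hcond] at hmn
        exact absurd rfl hmn
    have key := inj.tsum_eq (f := Fev) hsupp
    rw [← key]
    have hterm : ∀ jk : ℤ × ℤ, Fev (jk.1 + jk.2, jk.1 - jk.2) = t0 jk.1 * t0 jk.2 := by
      intro jk
      rw [hFev]
      dsimp only
      rw [if_pos (by omega : (jk.1 + jk.2 + (jk.1 - jk.2)) % 2 = 0)]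
      rw [hF, ht0]
      dsimp only
      rw [show (jk.1 + jk.2) ^ 2 + (jk.1 - jk.2) ^ 2 = 2 * jk.1 ^ 2 + 2 * jk.2 ^ 2 from by ring,
        zpow_add₀ hq, zpow_add₀ hw]
      ring
    rw [sq, theta0]
    rw [tsum_mul_tsum_of_summable_norm hs0 hs0]
    exact tsum_congr fun jk => by rw [← hterm jk]
  -- theta1 squared
  have h11 : theta1 p u ^ 2 = ∑' mn : ℤ × ℤ, Fod mn := by
    have hts1 : ∀ k : ℤ, p ^ (4 * k ^ 2 + 4 * k + 1) * u ^ (2 * k + 1) = (p * u) * s k := by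
      intro k
      rw [show (4 * k ^ 2 + 4 * k + 1 : ℤ) = 2 * (2 * k ^ 2 + 2 * k) + 1 from by ring,
        zpow_add₀ hp0, zpow_one, zpow_mul p 2, hp2]
      rw [show (2 * k + 1 : ℤ) = 2 * k + 1 from rfl, zpow_add₀ hu0, zpow_one, zpow_mul u 2, hu2]
      rw [hs]
      ring
    have hth1 : theta1 p u = (p * u) * ∑' k : ℤ, s k := by
      rw [theta1]
      rw [tsum_congr hts1, tsum_mul_left]
    have inj : Function.Injective (fun jk : ℤ × ℤ => (jk.1 + jk.2 + 1, jk.1 - jk.2)) := by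
      intro a b hab
      rw [Prod.ext_iff] at hab ⊢
      obtain ⟨h1, h2⟩ := hab
      dsimp only at h1 h2
      omega
    have hsupp : Function.support Fod ⊆
        Set.range (fun jk : ℤ × ℤ => (jk.1 + jk.2 + 1, jk.1 - jk.2)) := by
      intro mn hmn
      rw [Function.mem_support, hFod] at hmn
      dsimp only at hmn
      by_cases hcond : (mn.1 + mn.2) % 2 = 0
      · rw [if_pos hcond] at hmn
        exact absurd rfl hmn
      · refine ⟨((mn.1 + mn.2 - 1) / 2, (mn.1 - mn.2 - 1) / 2), ?_⟩
        rw [Prod.ext_iff]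
        constructor <;> dsimp only <;> omega
    have key := inj.tsum_eq (f := Fod) hsupp
    rw [← key]
    have hterm : ∀ jk : ℤ × ℤ, Fod (jk.1 + jk.2 + 1, jk.1 - jk.2)
        = (q * w) * (s jk.1 * s jk.2) := by
      intro jk
      rw [hFod]
      dsimp only
      rw [if_neg (by omega : ¬ (jk.1 + jk.2 + 1 + (jk.1 - jk.2)) % 2 = 0)]
      rw [hF, hs]
      dsimp only
      rw [show (jk.1 + jk.2 + 1) ^ 2 + (jk.1 - jk.2) ^ 2
          = (2 * jk.1 ^ 2 + 2 * jk.1) + ((2 * jk.2 ^ 2 + 2 * jk.2) + 1) from by ring]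
      simp only [zpow_add₀ hq, zpow_add₀ hw, zpow_one]
      ring
    rw [hth1, mul_pow, pow_two (∑' k : ℤ, s k), tsum_mul_tsum_of_summable_norm hss hss]
    rw [← tsum_mul_left]
    refine tsum_congr fun jk => ?_
    rw [hterm jk]
    have : (p * u) ^ 2 = q * w := by rw [mul_pow, hp, hu]
    rw [this]
  -- combine the two halves
  have hsum : theta0 q w ^ 2 + theta1 p u ^ 2
      = (∑' m : ℤ, q ^ (m ^ 2) * w ^ m) * (∑' m : ℤ, q ^ (m ^ 2) * (1:ℂ) ^ m) := by
    rw [h00, h11, ← Summable.tsum_add hFevsum hFodsum]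
    have h1 : ∀ mn : ℤ × ℤ, Fev mn + Fod mn = F mn := by
      intro mn
      rw [hFev, hFod]
      dsimp only
      split_ifs <;> ring
    rw [tsum_congr h1]
    have h2 : ∀ m : ℤ, q ^ (m ^ 2) * (1:ℂ) ^ m = q ^ (m ^ 2) := fun m => by
      rw [one_zpow, mul_one]
    rw [tsum_congr h2, tsum_mul_tsum_of_summable_norm hst hsG]
    refine tsum_congr fun mn => ?_
    rw [hF]
    dsimp only
    rw [zpow_add₀ hq]
    ring
  -- apply JTP twice
  rw [hsum, JTP hq hq1 hw, JTP hq hq1 (one_ne_zero : (1:ℂ) ≠ 0)]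
  -- now split the right-hand product
  have mA : Multipliable (fun n : ℕ => 1 - q ^ (2 * n + 2)) := by
    refine (multipliable_Pp hx).congr fun n => ?_
    rw [← pow_mul, show 2 * (n + 1) = 2 * n + 2 from by ring]
  have hLA : (∏' n : ℕ, (1 - (q ^ 2) ^ (n + 1))) = ∏' n : ℕ, (1 - q ^ (2 * n + 2)) := by
    refine tprod_congr fun n => ?_
    rw [← pow_mul, show 2 * (n + 1) = 2 * n + 2 from by ring]
  have mW : Multipliable (fun n : ℕ => (1 + w * q ^ (2 * n + 1)) * (1 + w⁻¹ * q ^ (2 * n + 1))) :=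
    (multipliable_W hq1 w).mul (multipliable_W hq1 w⁻¹)
  have mV : Multipliable (fun n : ℕ => (1 + 1 * q ^ (2 * n + 1)) * (1 + 1⁻¹ * q ^ (2 * n + 1))) :=
    (multipliable_W hq1 1).mul (multipliable_W hq1 1⁻¹)
  rw [hLA]
  have hsplit : (∏' n : ℕ, ((1 - q ^ (2 * n + 2)) ^ 2 * (1 + q ^ (2 * n + 1)) ^ 2 *
        (1 + w * q ^ (2 * n + 1)) * (1 + w⁻¹ * q ^ (2 * n + 1))))
      = (∏' n : ℕ, ((1 - q ^ (2 * n + 2)) *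
          ((1 + w * q ^ (2 * n + 1)) * (1 + w⁻¹ * q ^ (2 * n + 1)))))
        * (∏' n : ℕ, ((1 - q ^ (2 * n + 2)) *
          ((1 + 1 * q ^ (2 * n + 1)) * (1 + 1⁻¹ * q ^ (2 * n + 1))))) := by
    rw [← Multipliable.tprod_mul (mA.mul mW) (mA.mul mV)]
    refine tprod_congr fun n => ?_
    rw [inv_one, one_mul]
    ring
  rw [hsplit, Multipliable.tprod_mul mA mW, Multipliable.tprod_mul mA mV]

end Assembly

end QTI

/-- the quadratic theta function identity
`θ₀(q²,w)² + θ₁(q²,w)² = ∏_{n≥1} (1−q^{2n})²(1+q^{2n−1})²(1+wq^{2n−1})(1+w⁻¹q^{2n−1})`. -/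
theorem quadratic_theta_identity (q w p u : ℂ)
    (hq0 : 0 < ‖q‖) (hq1 : ‖q‖ < 1) (hw : w ≠ 0)
    (hp : p ^ 2 = q) (hu : u ^ 2 = w) :
    theta0 q w ^ 2 + theta1 p u ^ 2 =
      ∏' n : ℕ, ((1 - q ^ (2 * n + 2)) ^ 2 * (1 + q ^ (2 * n + 1)) ^ 2 *
        (1 + w * q ^ (2 * n + 1)) * (1 + w⁻¹ * q ^ (2 * n + 1))) := by
  have hq : q ≠ 0 := by
    intro h
    rw [h] at hq0
    simp at hq0
  exact QTI.main hq hq1 hw hp hu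
end

section
/- The sum of the squares of the two theta series factorizes as a product of two rank-one theta functions at the 'unsquared' modulus: θ₀(q²,w)² + θ₁(q²,w)² = θ₀(q,1) · θ₀(q,w), where θ₀(q,w) := Σ_{k∈ℤ} q^{k²} w^k. -/
open Filter Topology

/-- ratio-test summability on ℕ for `r^(a n² + b n) s^n`. -/
lemma nat_theta_summable (r s : ℝ) (hr0 : 0 < r) (hr1 : r < 1) (hs : 0 < s)
    (a b : ℤ) (ha : 1 ≤ a) :
    Summable (fun n : ℕ => r ^ (a * (n:ℤ)^2 + b * n) * s ^ (n:ℤ)) := by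
  have hrne : r ≠ 0 := hr0.ne'
  have hsne : s ≠ 0 := hs.ne'
  apply summable_of_ratio_norm_eventually_le (r := 1/2) (by norm_num)
  have hgeo : Tendsto (fun n : ℕ => (r ^ (2*a) : ℝ) ^ n * (r ^ (a + b) * s)) atTop (nhds 0) := by
    have h1 : (0:ℝ) < r ^ (2*a) := zpow_pos hr0 _
    have h2 : r ^ (2*a) < 1 := zpow_lt_one₀ hr0 hr1 (by omega)
    have := (tendsto_pow_atTop_nhds_zero_of_lt_one h1.le h2).mul_const (r ^ (a + b) * s)
    simpa using this
  have hev : ∀ᶠ n : ℕ in atTop, (r ^ (2*a) : ℝ) ^ n * (r ^ (a + b) * s) ≤ 1/2 :=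
    hgeo.eventually_le_const (by norm_num)
  filter_upwards [hev] with n hn
  have hterm : (0:ℝ) < r ^ (a * (n:ℤ)^2 + b * n) * s ^ (n:ℤ) := by positivity
  have key : r ^ (a * ((n:ℤ)+1)^2 + b * ((n:ℤ)+1)) * s ^ ((n:ℤ)+1)
      = (r ^ (a * (n:ℤ)^2 + b * n) * s ^ (n:ℤ)) * ((r ^ (2*a)) ^ n * (r ^ (a + b) * s)) := by
    rw [← zpow_natCast (r ^ (2*a)) n, ← zpow_mul]
    rw [show a * ((n:ℤ)+1)^2 + b * ((n:ℤ)+1) = (a * (n:ℤ)^2 + b * n) + (2*a*n + (a+b)) by ring]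
    simp only [zpow_add₀ hrne, zpow_add₀ hsne, zpow_one]
    ring
  rw [Real.norm_eq_abs, Real.norm_eq_abs, abs_of_pos hterm, abs_of_pos (by positivity)]
  push_cast
  rw [key]
  calc (r ^ (a * (n:ℤ)^2 + b * n) * s ^ (n:ℤ)) * ((r ^ (2*a)) ^ n * (r ^ (a + b) * s))
      ≤ (r ^ (a * (n:ℤ)^2 + b * n) * s ^ (n:ℤ)) * (1/2) := by
        apply mul_le_mul_of_nonneg_left hn hterm.le
    _ = 1/2 * (r ^ (a * (n:ℤ)^2 + b * n) * s ^ (n:ℤ)) := by ring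

lemma int_theta_summable (q w : ℂ) (hq0 : q ≠ 0) (hq1 : ‖q‖ < 1) (hw : w ≠ 0)
    (a b : ℤ) (ha : 1 ≤ a) :
    Summable (fun k : ℤ => ‖q ^ (a * k^2 + b * k) * w ^ k‖) := by
  have hr0 : 0 < ‖q‖ := norm_pos_iff.mpr hq0
  have hs0 : 0 < ‖w‖ := norm_pos_iff.mpr hw
  have hnorm : ∀ k : ℤ, ‖q ^ (a*k^2+b*k) * w ^ k‖
      = (‖q‖) ^ (a*k^2+b*k) * (‖w‖) ^ k := by
    intro k
    simp [norm_mul, norm_zpow]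
  simp only [hnorm]
  apply Summable.of_nat_of_neg
  · simpa using nat_theta_summable (‖q‖) (‖w‖) hr0 hq1 hs0 a b ha
  · have := nat_theta_summable (‖q‖) (‖w‖)⁻¹ hr0 hq1 (by positivity) a (-b) ha
    apply this.congr
    intro n
    rw [inv_zpow, ← zpow_neg]
    congr 1
    · congr 1
      ring

/-- `(m,n) ↦ (m-n, m+n)` as an equivalence onto pairs with even sum. -/
def evenEquiv : ℤ × ℤ ≃ {x : ℤ × ℤ | Even (x.1 + x.2)} where
  toFun mn := ⟨(mn.1 - mn.2, mn.1 + mn.2), ⟨mn.1, by ring⟩⟩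
  invFun x := ((x.1.1 + x.1.2) / 2, (x.1.2 - x.1.1) / 2)
  left_inv mn := by
    rcases mn with ⟨m, n⟩
    simp only [Prod.mk.injEq]
    omega
  right_inv x := by
    obtain ⟨⟨a, b⟩, hx⟩ := x
    obtain ⟨r, hr⟩ := hx
    apply Subtype.ext
    simp only [Prod.mk.injEq]
    omega

/-- `(m,n) ↦ (m-n, m+n+1)` as an equivalence onto pairs with odd sum. -/
def oddEquiv : ℤ × ℤ ≃ {x : ℤ × ℤ | ¬ Even (x.1 + x.2)} where
  toFun mn := ⟨(mn.1 - mn.2, mn.1 + mn.2 + 1), by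
    rintro ⟨r, hr⟩
    omega⟩
  invFun x := ((x.1.1 + x.1.2 - 1) / 2, (x.1.2 - x.1.1 - 1) / 2)
  left_inv mn := by
    rcases mn with ⟨m, n⟩
    simp only [Prod.mk.injEq]
    omega
  right_inv x := by
    obtain ⟨⟨a, b⟩, hx⟩ := x
    rw [Set.mem_setOf_eq, Int.not_even_iff] at hx
    apply Subtype.ext
    simp only [Prod.mk.injEq]
    omega

/-- The rank-one theta function at the 'unsquared' modulus:
`θ₀(q,w) = Σ_{k∈ℤ} q^{k²} w^k`. -/
noncomputable def theta0' (q w : ℂ) : ℂ := ∑' k : ℤ, q ^ (k ^ 2) * w ^ k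

/-- `θ₀(q²,w)² + θ₁(q²,w)² = θ₀(q,1)·θ₀(q,w)`. -/
theorem theta_squares_factorize (q w p u : ℂ)
    (hq0 : 0 < ‖q‖) (hq1 : ‖q‖ < 1) (hw : w ≠ 0)
    (hp : p ^ 2 = q) (hu : u ^ 2 = w) :
    theta0 q w ^ 2 + theta1 p u ^ 2 = theta0' q 1 * theta0' q w := by
  have hqne : q ≠ 0 := by
    intro h
    rw [h] at hq0
    simp at hq0
  have hpne : p ≠ 0 := by
    intro h
    apply hqne
    rw [← hp, h]
    ring
  have hune : u ≠ 0 := by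
    intro h
    apply hw
    rw [← hu, h]
    ring
  -- summability facts
  have Sg : Summable (fun k : ℤ => ‖q ^ (2 * k ^ 2) * w ^ k‖) := by
    simpa using int_theta_summable q w hqne hq1 hw 2 0 (by norm_num)
  have Sh : Summable (fun k : ℤ => ‖q ^ (2 * k ^ 2 + 2 * k) * w ^ k‖) :=
    int_theta_summable q w hqne hq1 hw 2 2 (by norm_num)
  have S1 : Summable (fun k : ℤ => ‖q ^ (k ^ 2) * (1 : ℂ) ^ k‖) := by
    simpa using int_theta_summable q 1 hqne hq1 one_ne_zero 1 0 (by norm_num)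
  have Sw : Summable (fun k : ℤ => ‖q ^ (k ^ 2) * w ^ k‖) := by
    simpa using int_theta_summable q w hqne hq1 hw 1 0 (by norm_num)
  -- the target double-sum function
  set F : ℤ × ℤ → ℂ := fun x => q ^ (x.1 ^ 2) * (q ^ (x.2 ^ 2) * w ^ x.2) with hFdef
  have hF : Summable F := by
    apply Summable.of_norm
    have h1 : Summable (fun a : ℤ => ‖q ^ (a ^ 2)‖) := by
      simpa using S1
    have := Summable.mul_of_nonneg h1 Sw (fun _ => norm_nonneg _) (fun _ => norm_nonneg _)
    exact this.congr fun x => (norm_mul _ _).symm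
  -- RHS is the double sum of F
  have hR : theta0' q 1 * theta0' q w = ∑' x : ℤ × ℤ, F x := by
    rw [theta0', theta0', tsum_mul_tsum_of_summable_norm S1 Sw]
    apply tsum_congr
    intro x
    simp [hFdef]
  -- theta1 as a multiple of a simpler sum
  have hterm : ∀ m : ℤ, p ^ (4 * m ^ 2 + 4 * m + 1) * u ^ (2 * m + 1)
      = (p * u) * (q ^ (2 * m ^ 2 + 2 * m) * w ^ m) := by
    intro m
    have hp2 : p ^ (2 : ℤ) = q := by
      rw [show (2 : ℤ) = ((2 : ℕ) : ℤ) from rfl, zpow_natCast, hp]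
    have hu2 : u ^ (2 : ℤ) = w := by
      rw [show (2 : ℤ) = ((2 : ℕ) : ℤ) from rfl, zpow_natCast, hu]
    calc p ^ (4 * m ^ 2 + 4 * m + 1) * u ^ (2 * m + 1)
        = (p ^ (2 * (2 * m ^ 2 + 2 * m)) * p ^ (1 : ℤ)) * (u ^ (2 * m) * u ^ (1 : ℤ)) := by
          rw [← zpow_add₀ hpne, ← zpow_add₀ hune]
          ring_nf
      _ = ((p ^ (2 : ℤ)) ^ (2 * m ^ 2 + 2 * m) * p) * ((u ^ (2 : ℤ)) ^ m * u) := by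
          rw [zpow_mul, zpow_mul, zpow_one, zpow_one]
      _ = (p * u) * (q ^ (2 * m ^ 2 + 2 * m) * w ^ m) := by
          rw [hp2, hu2]; ring
  have h1 : theta1 p u = (p * u) * ∑' m : ℤ, q ^ (2 * m ^ 2 + 2 * m) * w ^ m := by
    rw [theta1]
    simp only [hterm]
    exact tsum_mul_left
  -- splitting the double sum by parity
  set S : Set (ℤ × ℤ) := {x | Even (x.1 + x.2)} with hSdef
  have hsplit := Summable.tsum_subtype_add_tsum_subtype_compl hF S
  -- even part
  have key0 : ∀ m n : ℤ, F (m - n, m + n)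
      = (q ^ (2 * m ^ 2) * w ^ m) * (q ^ (2 * n ^ 2) * w ^ n) := by
    intro m n
    have l : F (m - n, m + n) = q ^ ((m - n) ^ 2 + (m + n) ^ 2) * w ^ (m + n) := by
      rw [hFdef, zpow_add₀ hqne]; ring
    have r : (q ^ (2 * m ^ 2) * w ^ m) * (q ^ (2 * n ^ 2) * w ^ n)
        = q ^ (2 * m ^ 2 + 2 * n ^ 2) * w ^ (m + n) := by
      rw [zpow_add₀ hqne, zpow_add₀ hw]; ring
    rw [l, r, show (m - n) ^ 2 + (m + n) ^ 2 = 2 * m ^ 2 + 2 * n ^ 2 by ring]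
  have He : (∑' x : ↥S, F x) = theta0 q w ^ 2 := by
    calc (∑' x : ↥S, F x)
        = ∑' mn : ℤ × ℤ, F ((mn.1 - mn.2, mn.1 + mn.2) : ℤ × ℤ) :=
          (Equiv.tsum_eq evenEquiv (fun x : ↥S => F x)).symm
      _ = ∑' mn : ℤ × ℤ, (q ^ (2 * mn.1 ^ 2) * w ^ mn.1) * (q ^ (2 * mn.2 ^ 2) * w ^ mn.2) :=
          tsum_congr fun mn => key0 mn.1 mn.2
      _ = (∑' m : ℤ, q ^ (2 * m ^ 2) * w ^ m) * (∑' n : ℤ, q ^ (2 * n ^ 2) * w ^ n) :=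
          (tsum_mul_tsum_of_summable_norm Sg Sg).symm
      _ = theta0 q w ^ 2 := by rw [theta0, sq]
  -- odd part
  have key1 : ∀ m n : ℤ, F (m - n, m + n + 1)
      = (q * w) * ((q ^ (2 * m ^ 2 + 2 * m) * w ^ m) * (q ^ (2 * n ^ 2 + 2 * n) * w ^ n)) := by
    intro m n
    have l : F (m - n, m + n + 1) = q ^ ((m - n) ^ 2 + (m + n + 1) ^ 2) * w ^ (m + n + 1) := by
      rw [hFdef, zpow_add₀ hqne]; ring
    have r : (q * w) * ((q ^ (2 * m ^ 2 + 2 * m) * w ^ m) * (q ^ (2 * n ^ 2 + 2 * n) * w ^ n))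
        = q ^ (1 + (2 * m ^ 2 + 2 * m) + (2 * n ^ 2 + 2 * n)) * w ^ (1 + m + n) := by
      simp only [zpow_add₀ hqne, zpow_add₀ hw, zpow_one]
      ring
    rw [l, r, show (m - n) ^ 2 + (m + n + 1) ^ 2
        = 1 + (2 * m ^ 2 + 2 * m) + (2 * n ^ 2 + 2 * n) by ring,
      show m + n + 1 = 1 + m + n by ring]
  have Ho : (∑' x : ↥Sᶜ, F x) = theta1 p u ^ 2 := by
    calc (∑' x : ↥Sᶜ, F x)
        = ∑' mn : ℤ × ℤ, F ((mn.1 - mn.2, mn.1 + mn.2 + 1) : ℤ × ℤ) :=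
          (Equiv.tsum_eq oddEquiv (fun x : ↥Sᶜ => F x)).symm
      _ = ∑' mn : ℤ × ℤ, (q * w) *
            ((q ^ (2 * mn.1 ^ 2 + 2 * mn.1) * w ^ mn.1)
              * (q ^ (2 * mn.2 ^ 2 + 2 * mn.2) * w ^ mn.2)) :=
          tsum_congr fun mn => key1 mn.1 mn.2
      _ = (q * w) * ∑' mn : ℤ × ℤ,
            ((q ^ (2 * mn.1 ^ 2 + 2 * mn.1) * w ^ mn.1)
              * (q ^ (2 * mn.2 ^ 2 + 2 * mn.2) * w ^ mn.2)) := tsum_mul_left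
      _ = (q * w) * ((∑' m : ℤ, q ^ (2 * m ^ 2 + 2 * m) * w ^ m)
            * (∑' n : ℤ, q ^ (2 * n ^ 2 + 2 * n) * w ^ n)) := by
          rw [tsum_mul_tsum_of_summable_norm Sh Sh]
      _ = theta1 p u ^ 2 := by
          rw [h1, mul_pow, mul_pow, hp, hu, sq]
  rw [hR, ← hsplit, He, Ho]
end
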